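/- arXiv:1808.06160 — 5 statements merged into one kernel-verified Lean document; each statement's English description precedes it below -/
import Mathlib

section
/- For every integer n ≥ 4, the 4-component connectivity of the n-dimensional alternating group network satisfies κ₄(AN_n) ≤ 3n − 6; that is, there exists a set F of 3n − 6 vertices of AN_n whose removal leaves a graph with at least 4 connected components. -/
open SimpleGraph

/-- Vertices of the alternating group network: even permutations of `{1,…,n}`
(modeled as permutations of `Fin n` with sign `1`). A permutation `p` is viewed
as the sequence `p₁p₂⋯p_n` where `p_j` (the symbol in position `j`) is `p ⟨j-1,_⟩`. -/
abbrev ANVertex (n : ℕ) : Type := {p : Equiv.Perm (Fin n) // Equiv.Perm.sign p = 1}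

/-- The adjacency relation of the `n`-dimensional alternating group network `AN_n`
(positions are 1-based in the informal description; position `j` is `⟨j-1,_⟩ : Fin n`). -/
def ANAdj (n : ℕ) (p q : Equiv.Perm (Fin n)) : Prop :=
  ∃ hn : 3 ≤ n,
    ((p ⟨0, by omega⟩ = q ⟨1, by omega⟩ ∧ p ⟨1, by omega⟩ = q ⟨2, by omega⟩ ∧
      p ⟨2, by omega⟩ = q ⟨0, by omega⟩ ∧ ∀ j : Fin n, 3 ≤ (j : ℕ) → p j = q j) ∨
     (p ⟨0, by omega⟩ = q ⟨2, by omega⟩ ∧ p ⟨1, by omega⟩ = q ⟨0, by omega⟩ ∧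
      p ⟨2, by omega⟩ = q ⟨1, by omega⟩ ∧ ∀ j : Fin n, 3 ≤ (j : ℕ) → p j = q j) ∨
     (∃ i : Fin n, 3 ≤ (i : ℕ) ∧ p ⟨0, by omega⟩ = q ⟨1, by omega⟩ ∧
      p ⟨1, by omega⟩ = q ⟨0, by omega⟩ ∧ p ⟨2, by omega⟩ = q i ∧ p i = q ⟨2, by omega⟩ ∧
      ∀ j : Fin n, 3 ≤ (j : ℕ) → j ≠ i → p j = q j))

/-- The `n`-dimensional alternating group network `AN_n`. -/
def AN (n : ℕ) : SimpleGraph (ANVertex n) where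
  Adj x y := ANAdj n x.1 y.1
  symm := by
    constructor
    rintro x y ⟨hn, h⟩
    refine ⟨hn, ?_⟩
    rcases h with ⟨h1, h2, h3, h4⟩ | ⟨h1, h2, h3, h4⟩ | ⟨i, hi, h1, h2, h3, h4, h5⟩
    · exact Or.inr (Or.inl ⟨h3.symm, h1.symm, h2.symm, fun j hj => (h4 j hj).symm⟩)
    · exact Or.inl ⟨h2.symm, h3.symm, h1.symm, fun j hj => (h4 j hj).symm⟩
    · exact Or.inr (Or.inr ⟨i, hi, h2.symm, h1.symm, h4.symm, h3.symm,
        fun j hj hji => (h5 j hj hji).symm⟩)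
  loopless := by
    constructor
    rintro x ⟨hn, ⟨h1, -⟩ | ⟨h1, -⟩ | ⟨i, hi, h1, -⟩⟩ <;>
      simpa [Fin.ext_iff] using x.1.injective h1

namespace ANAux

open Equiv

variable {n : ℕ}

/-- The 3-cycle σ on positions 0,1,2 (0↦2, 1↦0, 2↦1). -/
def sg (hn : 4 ≤ n) : Equiv.Perm (Fin n) :=
  Equiv.swap ⟨0, by omega⟩ ⟨2, by omega⟩ * Equiv.swap ⟨2, by omega⟩ ⟨1, by omega⟩

/-- τ_i = (0 1)(2 i). -/
def tu (hn : 4 ≤ n) (i : Fin n) : Equiv.Perm (Fin n) :=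
  Equiv.swap ⟨0, by omega⟩ ⟨1, by omega⟩ * Equiv.swap ⟨2, by omega⟩ i

lemma sg_apply (hn : 4 ≤ n) (j : Fin n) :
    sg hn j = if (j : ℕ) = 0 then (⟨2, by omega⟩ : Fin n)
      else if (j : ℕ) = 1 then ⟨0, by omega⟩
      else if (j : ℕ) = 2 then ⟨1, by omega⟩ else j := by
  simp only [sg, Perm.mul_apply, Equiv.swap_apply_def, Fin.ext_iff]
  rcases j with ⟨j, hj⟩
  by_cases h0 : j = 0 <;> by_cases h1 : j = 1 <;> by_cases h2 : j = 2 <;>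
    simp_all <;> omega

lemma sg_inv_apply (hn : 4 ≤ n) (j : Fin n) :
    (sg hn)⁻¹ j = if (j : ℕ) = 0 then (⟨1, by omega⟩ : Fin n)
      else if (j : ℕ) = 1 then ⟨2, by omega⟩
      else if (j : ℕ) = 2 then ⟨0, by omega⟩ else j := by
  have : (sg hn)⁻¹ = Equiv.swap ⟨2, by omega⟩ ⟨1, by omega⟩ *
      Equiv.swap ⟨0, by omega⟩ ⟨2, by omega⟩ := by
    rw [sg, mul_inv_rev]; simp
  rw [this]
  simp only [Perm.mul_apply, Equiv.swap_apply_def, Fin.ext_iff]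
  rcases j with ⟨j, hj⟩
  by_cases h0 : j = 0 <;> by_cases h1 : j = 1 <;> by_cases h2 : j = 2 <;>
    simp_all <;> omega

lemma tu_apply (hn : 4 ≤ n) (i : Fin n) (hi : 3 ≤ (i : ℕ)) (j : Fin n) :
    tu hn i j = if (j : ℕ) = 0 then (⟨1, by omega⟩ : Fin n)
      else if (j : ℕ) = 1 then ⟨0, by omega⟩
      else if (j : ℕ) = 2 then i
      else if j = i then ⟨2, by omega⟩ else j := by
  simp only [tu, Perm.mul_apply, Equiv.swap_apply_def, Fin.ext_iff]
  rcases j with ⟨j, hj⟩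
  rcases i with ⟨i, hii⟩
  simp only [Fin.ext_iff] at *
  have e0 : i ≠ 0 := by omega
  have e1 : i ≠ 1 := by omega
  have e2 : i ≠ 2 := by omega
  by_cases h0 : j = 0 <;> by_cases h1 : j = 1 <;> by_cases h2 : j = 2 <;>
    by_cases h3 : j = i <;> simp_all <;> omega


/-- The generator set: σ, σ⁻¹, and τ_i for 3 ≤ i < n. -/
def gset (hn : 4 ≤ n) : Finset (Equiv.Perm (Fin n)) :=
  insert (sg hn) (insert (sg hn)⁻¹
    ((Finset.univ.filter fun i : Fin n => 3 ≤ (i : ℕ)).image (tu hn)))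

lemma fin_cases3 (j : Fin n) :
    (j : ℕ) = 0 ∨ (j : ℕ) = 1 ∨ (j : ℕ) = 2 ∨ 3 ≤ (j : ℕ) := by omega

lemma adj_iff (hn : 4 ≤ n) (p q : Equiv.Perm (Fin n)) :
    ANAdj n p q ↔ ∃ g ∈ gset hn, q = p * g := by
  constructor
  · rintro ⟨h3n, ⟨h1, h2, h3, h4⟩ | ⟨h1, h2, h3, h4⟩ | ⟨i, hi, h1, h2, h3, h4, h5⟩⟩
    · refine ⟨sg hn, by simp [gset], Equiv.ext fun j => ?_⟩
      rw [Perm.mul_apply, sg_apply]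
      rcases fin_cases3 j with h | h | h | h
      · simp only [h]; norm_num; rw [h3]; exact congrArg q (Fin.ext h)
      · simp only [h]; norm_num; rw [h1]; exact congrArg q (Fin.ext h)
      · simp only [h]; norm_num; rw [h2]; exact congrArg q (Fin.ext h)
      · have e0 : ¬((j : ℕ) = 0) := by omega
        have e1 : ¬((j : ℕ) = 1) := by omega
        have e2 : ¬((j : ℕ) = 2) := by omega
        simp only [e0, e1, e2, if_false]
        exact (h4 j h).symm
    · refine ⟨(sg hn)⁻¹, by simp [gset], Equiv.ext fun j => ?_⟩
      rw [Perm.mul_apply, sg_inv_apply]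
      rcases fin_cases3 j with h | h | h | h
      · simp only [h]; norm_num; rw [h2]; exact congrArg q (Fin.ext h)
      · simp only [h]; norm_num; rw [h3]; exact congrArg q (Fin.ext h)
      · simp only [h]; norm_num; rw [h1]; exact congrArg q (Fin.ext h)
      · have e0 : ¬((j : ℕ) = 0) := by omega
        have e1 : ¬((j : ℕ) = 1) := by omega
        have e2 : ¬((j : ℕ) = 2) := by omega
        simp only [e0, e1, e2, if_false]
        exact (h4 j h).symm
    · have ei0 : ¬((i : ℕ) = 0) := by omega
      have ei1 : ¬((i : ℕ) = 1) := by omega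
      have ei2 : ¬((i : ℕ) = 2) := by omega
      refine ⟨tu hn i, ?_, Equiv.ext fun j => ?_⟩
      · simp only [gset, Finset.mem_insert, Finset.mem_image, Finset.mem_filter,
          Finset.mem_univ, true_and]
        exact Or.inr (Or.inr ⟨i, hi, rfl⟩)
      · rw [Perm.mul_apply, tu_apply hn i hi]
        rcases fin_cases3 j with h | h | h | h
        · simp only [h]; norm_num; rw [h2]; exact congrArg q (Fin.ext h)
        · simp only [h]; norm_num; rw [h1]; exact congrArg q (Fin.ext h)
        · simp only [h]; norm_num; rw [h4]; exact congrArg q (Fin.ext h)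
        · have e0 : ¬((j : ℕ) = 0) := by omega
          have e1 : ¬((j : ℕ) = 1) := by omega
          have e2 : ¬((j : ℕ) = 2) := by omega
          simp only [e0, e1, e2, if_false]
          by_cases hji : j = i
          · subst hji
            simp only [if_pos rfl, if_true]
            exact h3.symm
          · simp only [hji, if_false]
            exact (h5 j h hji).symm
  · rintro ⟨g, hg, rfl⟩
    refine ⟨by omega, ?_⟩
    simp only [gset, Finset.mem_insert, Finset.mem_image, Finset.mem_filter,
      Finset.mem_univ, true_and] at hg
    rcases hg with rfl | rfl | ⟨i, hi, rfl⟩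
    · refine Or.inl ⟨?_, ?_, ?_, fun j hj => ?_⟩
      · rw [Perm.mul_apply, sg_apply]; norm_num
      · rw [Perm.mul_apply, sg_apply]; norm_num
      · rw [Perm.mul_apply, sg_apply]; norm_num
      · rw [Perm.mul_apply, sg_apply]
        have e0 : ¬((j : ℕ) = 0) := by omega
        have e1 : ¬((j : ℕ) = 1) := by omega
        have e2 : ¬((j : ℕ) = 2) := by omega
        simp only [e0, e1, e2, if_false]
    · refine Or.inr (Or.inl ⟨?_, ?_, ?_, fun j hj => ?_⟩)
      · rw [Perm.mul_apply, sg_inv_apply]; norm_num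
      · rw [Perm.mul_apply, sg_inv_apply]; norm_num
      · rw [Perm.mul_apply, sg_inv_apply]; norm_num
      · rw [Perm.mul_apply, sg_inv_apply]
        have e0 : ¬((j : ℕ) = 0) := by omega
        have e1 : ¬((j : ℕ) = 1) := by omega
        have e2 : ¬((j : ℕ) = 2) := by omega
        simp only [e0, e1, e2, if_false]
    · have ei0 : ¬((i : ℕ) = 0) := by omega
      have ei1 : ¬((i : ℕ) = 1) := by omega
      have ei2 : ¬((i : ℕ) = 2) := by omega
      refine Or.inr (Or.inr ⟨i, hi, ?_, ?_, ?_, ?_, fun j hj hji => ?_⟩)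
      · rw [Perm.mul_apply, tu_apply hn i hi]; norm_num
      · rw [Perm.mul_apply, tu_apply hn i hi]; norm_num
      · rw [Perm.mul_apply, tu_apply hn i hi]; simp [ei0, ei1, ei2]
      · rw [Perm.mul_apply, tu_apply hn i hi]; simp
      · rw [Perm.mul_apply, tu_apply hn i hi]
        have e0 : ¬((j : ℕ) = 0) := by omega
        have e1 : ¬((j : ℕ) = 1) := by omega
        have e2 : ¬((j : ℕ) = 2) := by omega
        simp only [e0, e1, e2, hji, if_false]


lemma sign_sg (hn : 4 ≤ n) : Equiv.Perm.sign (sg hn) = 1 := by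
  have h1 : ((⟨0, by omega⟩ : Fin n)) ≠ ⟨2, by omega⟩ := by simp [Fin.ext_iff]
  have h2 : ((⟨2, by omega⟩ : Fin n)) ≠ ⟨1, by omega⟩ := by simp [Fin.ext_iff]
  rw [sg, map_mul, Equiv.Perm.sign_swap h1, Equiv.Perm.sign_swap h2]
  norm_num

lemma sign_tu (hn : 4 ≤ n) (i : Fin n) (hi : 3 ≤ (i : ℕ)) :
    Equiv.Perm.sign (tu hn i) = 1 := by
  have h1 : ((⟨0, by omega⟩ : Fin n)) ≠ ⟨1, by omega⟩ := by simp [Fin.ext_iff]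
  have h2 : ((⟨2, by omega⟩ : Fin n)) ≠ i := by simp [Fin.ext_iff]; omega
  rw [tu, map_mul, Equiv.Perm.sign_swap h1, Equiv.Perm.sign_swap h2]
  norm_num

/-- The index 3 as an element of `Fin n`. -/
def i3 (hn : 4 ≤ n) : Fin n := ⟨3, by omega⟩

lemma i3_ge (hn : 4 ≤ n) : 3 ≤ ((i3 hn : Fin n) : ℕ) := le_refl 3

lemma tu3_apply (hn : 4 ≤ n) (j : Fin n) :
    tu hn (i3 hn) j = if (j : ℕ) = 0 then (⟨1, by omega⟩ : Fin n)
      else if (j : ℕ) = 1 then ⟨0, by omega⟩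
      else if (j : ℕ) = 2 then ⟨3, by omega⟩
      else if (j : ℕ) = 3 then ⟨2, by omega⟩ else j := by
  rw [tu_apply hn (i3 hn) (i3_ge hn)]
  rcases fin_cases3 j with h | h | h | h <;> simp [h, i3, Fin.ext_iff] <;> omega

/-- `τ₃` is an involution. -/
lemma tu3_sq (hn : 4 ≤ n) : tu hn (i3 hn) * tu hn (i3 hn) = 1 := by
  apply Equiv.ext; intro j
  rw [Perm.mul_apply, Perm.one_apply]
  rcases fin_cases3 j with h | h | h | h
  · simp [tu3_apply, h, Fin.ext_iff]
  · simp [tu3_apply, h, Fin.ext_iff]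
  · simp [tu3_apply, h, Fin.ext_iff]
  · by_cases h3 : (j : ℕ) = 3
    · simp [tu3_apply, h3, Fin.ext_iff]
    · have e0 : ¬((j : ℕ) = 0) := by omega
      have e1 : ¬((j : ℕ) = 1) := by omega
      have e2 : ¬((j : ℕ) = 2) := by omega
      simp [tu3_apply, e0, e1, e2, h3]

/-- The key identity `τ₃ σ τ₃ = σ⁻¹ τ₃ σ⁻¹`. -/
lemma key_id (hn : 4 ≤ n) :
    tu hn (i3 hn) * sg hn * tu hn (i3 hn) = (sg hn)⁻¹ * tu hn (i3 hn) * (sg hn)⁻¹ := by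
  apply Equiv.ext; intro j
  simp only [Perm.mul_apply]
  rcases fin_cases3 j with h | h | h | h
  · simp [tu3_apply, sg_apply, sg_inv_apply, h, Fin.ext_iff]
  · simp [tu3_apply, sg_apply, sg_inv_apply, h, Fin.ext_iff]
  · simp [tu3_apply, sg_apply, sg_inv_apply, h, Fin.ext_iff]
  · by_cases h3 : (j : ℕ) = 3
    · simp [tu3_apply, sg_apply, sg_inv_apply, h3, Fin.ext_iff]
    · have e0 : ¬((j : ℕ) = 0) := by omega
      have e1 : ¬((j : ℕ) = 1) := by omega
      have e2 : ¬((j : ℕ) = 2) := by omega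
      simp [tu3_apply, sg_apply, sg_inv_apply, e0, e1, e2, h3]

/-- The vertex `u` : the identity. -/
def vu (hn : 4 ≤ n) : ANVertex n := ⟨1, by simp⟩
/-- The vertex `v = τ₃ σ`. -/
def vv (hn : 4 ≤ n) : ANVertex n :=
  ⟨tu hn (i3 hn) * sg hn, by rw [map_mul, sign_tu hn _ (i3_ge hn), sign_sg]; norm_num⟩
/-- The vertex `w = σ⁻¹ τ₃`. -/
def vw (hn : 4 ≤ n) : ANVertex n :=
  ⟨(sg hn)⁻¹ * tu hn (i3 hn), by
    rw [map_mul, map_inv, sign_sg, sign_tu hn _ (i3_ge hn)]; norm_num⟩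
/-- `x₁ = τ₃`, a common neighbor of `u` and `v`. -/
def vx1 (hn : 4 ≤ n) : ANVertex n := ⟨tu hn (i3 hn), sign_tu hn _ (i3_ge hn)⟩
/-- `x₂ = σ⁻¹`, a common neighbor of `u` and `w`. -/
def vx2 (hn : 4 ≤ n) : ANVertex n := ⟨(sg hn)⁻¹, by rw [map_inv, sign_sg]; norm_num⟩
/-- `x₃ = τ₃ σ τ₃`, a common neighbor of `v` and `w`. -/
def vx3 (hn : 4 ≤ n) : ANVertex n :=
  ⟨tu hn (i3 hn) * sg hn * tu hn (i3 hn), by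
    rw [map_mul, map_mul, sign_tu hn _ (i3_ge hn), sign_sg]; norm_num⟩

lemma sg_mem (hn : 4 ≤ n) : sg hn ∈ gset hn := by simp [gset]
lemma sg_inv_mem (hn : 4 ≤ n) : (sg hn)⁻¹ ∈ gset hn := by simp [gset]
lemma tu3_mem (hn : 4 ≤ n) : tu hn (i3 hn) ∈ gset hn := by
  simp only [gset, Finset.mem_insert, Finset.mem_image, Finset.mem_filter,
    Finset.mem_univ, true_and]
  exact Or.inr (Or.inr ⟨i3 hn, i3_ge hn, rfl⟩)

lemma adj_u_x1 (hn : 4 ≤ n) : (AN n).Adj (vu hn) (vx1 hn) := by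
  show ANAdj n _ _
  rw [adj_iff hn]
  exact ⟨tu hn (i3 hn), tu3_mem hn, (one_mul _).symm⟩

lemma adj_v_x1 (hn : 4 ≤ n) : (AN n).Adj (vv hn) (vx1 hn) := by
  show ANAdj n _ _
  rw [adj_iff hn]
  refine ⟨(sg hn)⁻¹, sg_inv_mem hn, ?_⟩
  show tu hn (i3 hn) = tu hn (i3 hn) * sg hn * (sg hn)⁻¹
  rw [mul_inv_cancel_right]

lemma adj_u_x2 (hn : 4 ≤ n) : (AN n).Adj (vu hn) (vx2 hn) := by
  show ANAdj n _ _
  rw [adj_iff hn]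
  exact ⟨(sg hn)⁻¹, sg_inv_mem hn, (one_mul _).symm⟩

lemma adj_w_x2 (hn : 4 ≤ n) : (AN n).Adj (vw hn) (vx2 hn) := by
  show ANAdj n _ _
  rw [adj_iff hn]
  refine ⟨tu hn (i3 hn), tu3_mem hn, ?_⟩
  show (sg hn)⁻¹ = (sg hn)⁻¹ * tu hn (i3 hn) * tu hn (i3 hn)
  rw [mul_assoc, tu3_sq hn, mul_one]

lemma adj_v_x3 (hn : 4 ≤ n) : (AN n).Adj (vv hn) (vx3 hn) := by
  show ANAdj n _ _
  rw [adj_iff hn]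
  exact ⟨tu hn (i3 hn), tu3_mem hn, rfl⟩

lemma adj_w_x3 (hn : 4 ≤ n) : (AN n).Adj (vw hn) (vx3 hn) := by
  show ANAdj n _ _
  rw [adj_iff hn]
  refine ⟨(sg hn)⁻¹, sg_inv_mem hn, ?_⟩
  show tu hn (i3 hn) * sg hn * tu hn (i3 hn) = (sg hn)⁻¹ * tu hn (i3 hn) * (sg hn)⁻¹
  exact key_id hn


lemma gset_cases (hn : 4 ≤ n) {g : Equiv.Perm (Fin n)} (hg : g ∈ gset hn) :
    g = sg hn ∨ g = (sg hn)⁻¹ ∨ ∃ i : Fin n, 3 ≤ (i : ℕ) ∧ g = tu hn i := by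
  simp only [gset, Finset.mem_insert, Finset.mem_image, Finset.mem_filter,
    Finset.mem_univ, true_and] at hg
  rcases hg with rfl | rfl | ⟨i, hi, rfl⟩
  · exact Or.inl rfl
  · exact Or.inr (Or.inl rfl)
  · exact Or.inr (Or.inr ⟨i, hi, rfl⟩)

lemma not_adj_u_v (hn : 4 ≤ n) : ¬ (AN n).Adj (vu hn) (vv hn) := by
  intro hadj
  rw [show (AN n).Adj (vu hn) (vv hn) = ANAdj n (vu hn).1 (vv hn).1 from rfl,
    adj_iff hn] at hadj
  obtain ⟨g, hg, he⟩ := hadj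
  rw [show (vu hn).1 = 1 from rfl, one_mul] at he
  rcases gset_cases hn hg with rfl | rfl | ⟨i, hi, rfl⟩
  · have := DFunLike.congr_fun he (⟨1, by omega⟩ : Fin n)
    simp [vv, Perm.mul_apply, tu3_apply, sg_apply, Fin.ext_iff] at this
  · have := DFunLike.congr_fun he (⟨1, by omega⟩ : Fin n)
    simp [vv, Perm.mul_apply, tu3_apply, sg_apply, sg_inv_apply, Fin.ext_iff] at this
  · have := DFunLike.congr_fun he (⟨0, by omega⟩ : Fin n)
    simp [vv, Perm.mul_apply, tu3_apply, sg_apply, tu_apply hn i hi, Fin.ext_iff] at this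

lemma not_adj_u_w (hn : 4 ≤ n) : ¬ (AN n).Adj (vu hn) (vw hn) := by
  intro hadj
  rw [show (AN n).Adj (vu hn) (vw hn) = ANAdj n (vu hn).1 (vw hn).1 from rfl,
    adj_iff hn] at hadj
  obtain ⟨g, hg, he⟩ := hadj
  rw [show (vu hn).1 = 1 from rfl, one_mul] at he
  rcases gset_cases hn hg with rfl | rfl | ⟨i, hi, rfl⟩
  · have := DFunLike.congr_fun he (⟨1, by omega⟩ : Fin n)
    simp [vw, Perm.mul_apply, tu3_apply, sg_apply, sg_inv_apply, Fin.ext_iff] at this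
  · have := DFunLike.congr_fun he (⟨1, by omega⟩ : Fin n)
    simp [vw, Perm.mul_apply, tu3_apply, sg_inv_apply, Fin.ext_iff] at this
  · have := DFunLike.congr_fun he (⟨0, by omega⟩ : Fin n)
    simp [vw, Perm.mul_apply, tu3_apply, sg_inv_apply, tu_apply hn i hi, Fin.ext_iff] at this

lemma not_adj_v_w (hn : 4 ≤ n) : ¬ (AN n).Adj (vv hn) (vw hn) := by
  intro hadj
  rw [show (AN n).Adj (vv hn) (vw hn) = ANAdj n (vv hn).1 (vw hn).1 from rfl,
    adj_iff hn] at hadj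
  obtain ⟨g, hg, he⟩ := hadj
  rcases gset_cases hn hg with rfl | rfl | ⟨i, hi, rfl⟩
  · have := DFunLike.congr_fun he (⟨1, by omega⟩ : Fin n)
    simp [vv, vw, Perm.mul_apply, tu3_apply, sg_apply, sg_inv_apply, Fin.ext_iff] at this
  · have := DFunLike.congr_fun he (⟨1, by omega⟩ : Fin n)
    simp [vv, vw, Perm.mul_apply, tu3_apply, sg_apply, sg_inv_apply, Fin.ext_iff] at this
  · have := DFunLike.congr_fun he (⟨0, by omega⟩ : Fin n)
    simp [vv, vw, Perm.mul_apply, tu3_apply, sg_apply, sg_inv_apply,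
      tu_apply hn i hi, Fin.ext_iff] at this

lemma u_ne_v (hn : 4 ≤ n) : vu hn ≠ vv hn := by
  intro h
  have := DFunLike.congr_fun (congrArg Subtype.val h) (⟨0, by omega⟩ : Fin n)
  simp [vu, vv, Perm.mul_apply, tu3_apply, sg_apply, Fin.ext_iff] at this

lemma u_ne_w (hn : 4 ≤ n) : vu hn ≠ vw hn := by
  intro h
  have := DFunLike.congr_fun (congrArg Subtype.val h) (⟨0, by omega⟩ : Fin n)
  simp [vu, vw, Perm.mul_apply, tu3_apply, sg_inv_apply, Fin.ext_iff] at this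

lemma v_ne_w (hn : 4 ≤ n) : vv hn ≠ vw hn := by
  intro h
  have := DFunLike.congr_fun (congrArg Subtype.val h) (⟨0, by omega⟩ : Fin n)
  simp [vv, vw, Perm.mul_apply, tu3_apply, sg_apply, sg_inv_apply, Fin.ext_iff] at this

lemma x1_ne_x3 (hn : 4 ≤ n) : vx1 hn ≠ vx3 hn := by
  intro h
  have := DFunLike.congr_fun (congrArg Subtype.val h) (⟨1, by omega⟩ : Fin n)
  simp [vx1, vx3, Perm.mul_apply, tu3_apply, sg_apply, Fin.ext_iff] at this

lemma x2_ne_x3 (hn : 4 ≤ n) : vx2 hn ≠ vx3 hn := by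
  intro h
  have := DFunLike.congr_fun (congrArg Subtype.val h) (⟨1, by omega⟩ : Fin n)
  simp [vx2, vx3, Perm.mul_apply, tu3_apply, sg_apply, sg_inv_apply, Fin.ext_iff] at this


lemma card_gset_le (hn : 4 ≤ n) : (gset hn).card ≤ n - 1 := by
  have h1 : (Finset.univ.filter fun i : Fin n => 3 ≤ (i : ℕ)).card ≤ n - 3 := by
    have hsub : (Finset.univ.filter fun i : Fin n => 3 ≤ (i : ℕ)) ⊆
        Finset.univ \ {(⟨0, by omega⟩ : Fin n), ⟨1, by omega⟩, ⟨2, by omega⟩} := by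
      intro i hi
      simp only [Finset.mem_filter, Finset.mem_univ, true_and] at hi
      simp only [Finset.mem_sdiff, Finset.mem_univ, true_and, Finset.mem_insert,
        Finset.mem_singleton]
      push_neg
      refine ⟨?_, ?_, ?_⟩
      · rintro rfl
        simp only [Fin.mk.injEq] at hi ⊢
        omega
      · rintro rfl
        simp only [Fin.mk.injEq] at hi ⊢
        omega
      · rintro rfl
        simp only [Fin.mk.injEq] at hi ⊢
        omega
    refine le_trans (Finset.card_le_card hsub) ?_
    rw [Finset.card_sdiff_of_subset (Finset.subset_univ _)]
    have : ({(⟨0, by omega⟩ : Fin n), ⟨1, by omega⟩, ⟨2, by omega⟩} : Finset (Fin n)).card = 3 := by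
      rw [Finset.card_insert_of_notMem, Finset.card_insert_of_notMem,
        Finset.card_singleton] <;>
        simp [Fin.ext_iff]
    rw [this, Finset.card_univ, Fintype.card_fin]
  calc (gset hn).card ≤ ((insert (sg hn)⁻¹
        ((Finset.univ.filter fun i : Fin n => 3 ≤ (i : ℕ)).image (tu hn))).card) + 1 :=
        Finset.card_insert_le _ _
    _ ≤ (((Finset.univ.filter fun i : Fin n => 3 ≤ (i : ℕ)).image (tu hn)).card + 1) + 1 :=
        by gcongr; exact Finset.card_insert_le _ _
    _ ≤ ((Finset.univ.filter fun i : Fin n => 3 ≤ (i : ℕ)).card + 1) + 1 :=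
        by gcongr; exact Finset.card_image_le
    _ ≤ n - 1 := by omega

lemma card_nbhd_le (hn : 4 ≤ n) (x : ANVertex n)
    [DecidablePred fun y : ANVertex n => (AN n).Adj x y] :
    (Finset.univ.filter fun y : ANVertex n => (AN n).Adj x y).card ≤ n - 1 := by
  refine le_trans (Finset.card_le_card_of_injOn (fun y => x.1⁻¹ * y.1) ?_ ?_)
    (card_gset_le hn)
  · intro y hy
    simp only [Finset.mem_coe, Finset.mem_filter, Finset.mem_univ, true_and] at hy
    rw [show (AN n).Adj x y = ANAdj n x.1 y.1 from rfl, adj_iff hn] at hy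
    obtain ⟨g, hg, he⟩ := hy
    show (x.1)⁻¹ * y.1 ∈ gset hn
    rw [he, ← mul_assoc, inv_mul_cancel, one_mul]
    exact hg
  · intro y _ z _ h
    have : y.1 = z.1 := by
      have := congrArg (fun t => x.1 * t) h
      simpa [← mul_assoc] using this
    exact Subtype.ext this

lemma six_mul_le_factorial (hn : 4 ≤ n) : 6 * n ≤ n.factorial := by
  induction n, hn using Nat.le_induction with
  | base => decide
  | succ m hm ih =>
    rw [Nat.factorial_succ]
    have h6 : 6 ≤ m.factorial := le_trans (by omega) ih
    calc 6 * (m + 1) = (m + 1) * 6 := by ring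
      _ ≤ (m + 1) * m.factorial := Nat.mul_le_mul_left _ h6

lemma card_ANVertex (hn : 4 ≤ n) : 2 * Fintype.card (ANVertex n) = n.factorial := by
  have hnt : Nontrivial (Fin n) := ⟨⟨⟨0, by omega⟩, ⟨1, by omega⟩, by simp [Fin.ext_iff]⟩⟩
  have he : ANVertex n ≃ alternatingGroup (Fin n) :=
    Equiv.subtypeEquivRight fun p => (Equiv.Perm.mem_alternatingGroup).symm
  rw [Fintype.card_congr he, two_mul_card_alternatingGroup, Fintype.card_perm,
    Fintype.card_fin]

lemma card_ANVertex_ge (hn : 4 ≤ n) : 3 * n ≤ Fintype.card (ANVertex n) := by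
  have h1 := card_ANVertex hn
  have h2 := six_mul_le_factorial hn
  omega

end ANAux

/-- The `ℓ`-component connectivity `κ_ℓ(G)`: the minimum number of vertices whose
removal from `G` results in a graph with at least `ℓ` connected components or a
graph with fewer than `ℓ` vertices. -/
noncomputable def componentConnectivity {V : Type*} [Fintype V] (G : SimpleGraph V)
    (l : ℕ) : ℕ :=
  sInf {k | ∃ F : Finset V, F.card = k ∧
    (l ≤ Nat.card ((G.induce (↑F : Set V)ᶜ).ConnectedComponent) ∨
     Fintype.card V - F.card < l)}

/-- For every integer `n ≥ 4`, `κ₄(AN_n) ≤ 3n − 6`; that is, there exists a set `F`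
of `3n − 6` vertices of `AN_n` whose removal leaves a graph with at least `4`
connected components. -/
theorem kappa4_AN_upper (n : ℕ) (hn : 4 ≤ n) :
    componentConnectivity (AN n) 4 ≤ 3 * n - 6 ∧
    ∃ F : Finset (ANVertex n), F.card = 3 * n - 6 ∧
      4 ≤ Nat.card (((AN n).induce (↑F : Set (ANVertex n))ᶜ).ConnectedComponent) := by
  classical
  obtain ⟨F, hFcard, hFcomp⟩ : ∃ F : Finset (ANVertex n), F.card = 3 * n - 6 ∧
      4 ≤ Nat.card (((AN n).induce (↑F : Set (ANVertex n))ᶜ).ConnectedComponent) := by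
    set u := ANAux.vu hn with hu_def
    set v := ANAux.vv hn with hv_def
    set w := ANAux.vw hn with hw_def
    set x1 := ANAux.vx1 hn with hx1_def
    set x2 := ANAux.vx2 hn with hx2_def
    set x3 := ANAux.vx3 hn with hx3_def
    set A := Finset.univ.filter (fun y : ANVertex n => (AN n).Adj u y) with hA_def
    set B := Finset.univ.filter (fun y : ANVertex n => (AN n).Adj v y) with hB_def
    set C := Finset.univ.filter (fun y : ANVertex n => (AN n).Adj w y) with hC_def
    have memA : ∀ y, y ∈ A ↔ (AN n).Adj u y := by
      intro y; simp [hA_def]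
    have memB : ∀ y, y ∈ B ↔ (AN n).Adj v y := by
      intro y; simp [hB_def]
    have memC : ∀ y, y ∈ C ↔ (AN n).Adj w y := by
      intro y; simp [hC_def]
    have hAcard : A.card ≤ n - 1 := ANAux.card_nbhd_le hn u
    have hBcard : B.card ≤ n - 1 := ANAux.card_nbhd_le hn v
    have hCcard : C.card ≤ n - 1 := ANAux.card_nbhd_le hn w
    have hx1A : x1 ∈ A := (memA x1).mpr (ANAux.adj_u_x1 hn)
    have hx1B : x1 ∈ B := (memB x1).mpr (ANAux.adj_v_x1 hn)
    have hx2A : x2 ∈ A := (memA x2).mpr (ANAux.adj_u_x2 hn)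
    have hx2C : x2 ∈ C := (memC x2).mpr (ANAux.adj_w_x2 hn)
    have hx3B : x3 ∈ B := (memB x3).mpr (ANAux.adj_v_x3 hn)
    have hx3C : x3 ∈ C := (memC x3).mpr (ANAux.adj_w_x3 hn)
    set F0 := A ∪ B ∪ C with hF0_def
    have hF0sub : F0 ⊆ A ∪ B.erase x1 ∪ ((C.erase x2).erase x3) := by
      intro y hy
      rcases Finset.mem_union.mp hy with hy' | hyC
      · rcases Finset.mem_union.mp hy' with hyA | hyB
        · exact Finset.mem_union_left _ (Finset.mem_union_left _ hyA)
        · by_cases h1 : y = x1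
          · subst h1; exact Finset.mem_union_left _ (Finset.mem_union_left _ hx1A)
          · exact Finset.mem_union_left _ (Finset.mem_union_right _
              (Finset.mem_erase.mpr ⟨h1, hyB⟩))
      · by_cases h2 : y = x2
        · subst h2; exact Finset.mem_union_left _ (Finset.mem_union_left _ hx2A)
        · by_cases h3 : y = x3
          · subst h3
            refine Finset.mem_union_left _ (Finset.mem_union_right _
              (Finset.mem_erase.mpr ⟨ANAux.x1_ne_x3 hn ∘ Eq.symm, hx3B⟩))
          · exact Finset.mem_union_right _
              (Finset.mem_erase.mpr ⟨h3, Finset.mem_erase.mpr ⟨h2, hyC⟩⟩)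
    have hF0card : F0.card ≤ 3 * n - 6 := by
      have h1 : (B.erase x1).card = B.card - 1 := Finset.card_erase_of_mem hx1B
      have h2 : ((C.erase x2).erase x3).card = C.card - 2 := by
        rw [Finset.card_erase_of_mem
          (Finset.mem_erase.mpr ⟨ANAux.x2_ne_x3 hn ∘ Eq.symm, hx3C⟩),
          Finset.card_erase_of_mem hx2C]
        omega
      have h3 := Finset.card_le_card hF0sub
      have h4 := Finset.card_union_le (A ∪ B.erase x1) ((C.erase x2).erase x3)
      have h5 := Finset.card_union_le A (B.erase x1)
      have hB1 : 1 ≤ B.card := Finset.card_pos.mpr ⟨x1, hx1B⟩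
      have hC2 : 2 ≤ C.card := by
        have : ({x2, x3} : Finset (ANVertex n)) ⊆ C := by
          intro t ht
          rcases Finset.mem_insert.mp ht with rfl | ht
          · exact hx2C
          · rw [Finset.mem_singleton] at ht; subst ht; exact hx3C
        have hcc : ({x2, x3} : Finset (ANVertex n)).card = 2 := by
          rw [Finset.card_insert_of_notMem (by simp only [Finset.mem_singleton]; exact ANAux.x2_ne_x3 hn),
            Finset.card_singleton]
        calc 2 = ({x2, x3} : Finset (ANVertex n)).card := hcc.symm
          _ ≤ C.card := Finset.card_le_card this
      omega
    -- pad F0 up to exactly 3n-6 vertices avoiding u, v, w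
    have hcardV : 3 * n ≤ Fintype.card (ANVertex n) := ANAux.card_ANVertex_ge hn
    have hUVW : ({u, v, w} : Finset (ANVertex n)).card ≤ 3 := by
      refine le_trans (Finset.card_insert_le _ _) ?_
      have := Finset.card_insert_le v ({w} : Finset (ANVertex n))
      simp at this ⊢
      omega
    have hpool : 3 * n - 6 - F0.card ≤ (Finset.univ \ (F0 ∪ {u, v, w})).card := by
      have h1 := Finset.le_card_sdiff (F0 ∪ {u, v, w}) Finset.univ
      have h2 : (F0 ∪ {u, v, w}).card ≤ F0.card + 3 :=
        le_trans (Finset.card_union_le _ _) (by omega)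
      have h3 : Finset.univ.card = Fintype.card (ANVertex n) := Finset.card_univ
      omega
    obtain ⟨P, hPsub, hPcard⟩ := Finset.exists_subset_card_eq hpool
    have hPdisj : Disjoint P (F0 ∪ {u, v, w}) :=
      (Finset.subset_sdiff.mp hPsub).2
    set F := F0 ∪ P with hF_def
    have hFcard : F.card = 3 * n - 6 := by
      rw [hF_def, Finset.card_union_of_disjoint
        (Finset.disjoint_left.mpr fun a haF0 haP =>
          (Finset.disjoint_left.mp hPdisj haP) (Finset.mem_union_left _ haF0))]
      omega
    -- u, v, w are not in F
    have huB : u ∉ B := by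
      rw [memB]
      intro h
      exact ANAux.not_adj_u_v hn ((AN n).adj_symm h)
    have huC : u ∉ C := by
      rw [memC]
      intro h
      exact ANAux.not_adj_u_w hn ((AN n).adj_symm h)
    have hvA : v ∉ A := by
      rw [memA]; exact ANAux.not_adj_u_v hn
    have hvC : v ∉ C := by
      rw [memC]
      intro h
      exact ANAux.not_adj_v_w hn ((AN n).adj_symm h)
    have hwA : w ∉ A := by
      rw [memA]; exact ANAux.not_adj_u_w hn
    have hwB : w ∉ B := by
      rw [memB]; exact ANAux.not_adj_v_w hn
    have hnotP : ∀ t, t ∈ ({u, v, w} : Finset (ANVertex n)) → t ∉ P := by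
      intro t ht htP
      exact (Finset.disjoint_left.mp hPdisj htP) (Finset.mem_union_right _ ht)
    have huF : u ∉ F := by
      rw [hF_def]
      intro h
      rcases Finset.mem_union.mp h with h | h
      · rcases Finset.mem_union.mp h with h | h
        · rcases Finset.mem_union.mp h with h | h
          · exact (AN n).irrefl ((memA u).mp h)
          · exact huB h
        · exact huC h
      · exact hnotP u (by simp) h
    have hvF : v ∉ F := by
      rw [hF_def]
      intro h
      rcases Finset.mem_union.mp h with h | h
      · rcases Finset.mem_union.mp h with h | h
        · rcases Finset.mem_union.mp h with h | h
          · exact hvA h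
          · exact (AN n).irrefl ((memB v).mp h)
        · exact hvC h
      · exact hnotP v (by simp) h
    have hwF : w ∉ F := by
      rw [hF_def]
      intro h
      rcases Finset.mem_union.mp h with h | h
      · rcases Finset.mem_union.mp h with h | h
        · rcases Finset.mem_union.mp h with h | h
          · exact hwA h
          · exact hwB h
        · exact (AN n).irrefl ((memC w).mp h)
      · exact hnotP w (by simp) h
    -- a fourth vertex outside F ∪ {u, v, w}
    have hz : (Finset.univ \ (F ∪ {u, v, w})).Nonempty := by
      rw [← Finset.card_pos]
      have h1 := Finset.le_card_sdiff (F ∪ {u, v, w}) Finset.univ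
      have h2 : (F ∪ {u, v, w}).card ≤ (3 * n - 6) + 3 :=
        le_trans (Finset.card_union_le _ _) (by omega)
      have h3 : Finset.univ.card = Fintype.card (ANVertex n) := Finset.card_univ
      omega
    obtain ⟨z, hzmem⟩ := hz
    rw [Finset.mem_sdiff] at hzmem
    obtain ⟨-, hzF'⟩ := hzmem
    have hzF : z ∉ F := fun h => hzF' (Finset.mem_union_left _ h)
    have hzu : z ≠ u := fun h => hzF' (Finset.mem_union_right _ (by simp [h]))
    have hzv : z ≠ v := fun h => hzF' (Finset.mem_union_right _ (by simp [h]))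
    have hzw : z ≠ w := fun h => hzF' (Finset.mem_union_right _ (by simp [h]))
    -- move into the induced graph
    refine ⟨F, hFcard, ?_⟩
    set s : Set (ANVertex n) := (↑F : Set (ANVertex n))ᶜ with hs_def
    have hmems : ∀ t : ANVertex n, t ∈ s ↔ t ∉ F := by
      intro t; simp [hs_def]
    set G' := (AN n).induce s with hG'_def
    have key : ∀ (x : s), (∀ y : ANVertex n, (AN n).Adj x.1 y → y ∈ F) →
        ∀ c : s, G'.Reachable x c → c = x := by
      intro x hx c hr
      obtain ⟨pth⟩ := hr
      cases pth with
      | nil => rfl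
      | cons h q =>
        exfalso
        rename_i y
        have hadj : (AN n).Adj x.1 y.1 := h
        have := hx y.1 hadj
        exact (hmems y.1).mp y.2 this
    have hsubF : ∀ y : ANVertex n, (AN n).Adj u y → y ∈ F := by
      intro y h
      exact Finset.mem_union_left _ (Finset.mem_union_left _
        (Finset.mem_union_left _ ((memA y).mpr h)))
    have hsubFv : ∀ y : ANVertex n, (AN n).Adj v y → y ∈ F := by
      intro y h
      exact Finset.mem_union_left _ (Finset.mem_union_left _
        (Finset.mem_union_right _ ((memB y).mpr h)))
    have hsubFw : ∀ y : ANVertex n, (AN n).Adj w y → y ∈ F := by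
      intro y h
      exact Finset.mem_union_left _ (Finset.mem_union_right _ ((memC y).mpr h))
    set u' : s := ⟨u, (hmems u).mpr huF⟩ with hu'_def
    set v' : s := ⟨v, (hmems v).mpr hvF⟩ with hv'_def
    set w' : s := ⟨w, (hmems w).mpr hwF⟩ with hw'_def
    set z' : s := ⟨z, (hmems z).mpr hzF⟩ with hz'_def
    set cu := G'.connectedComponentMk u' with hcu_def
    set cv := G'.connectedComponentMk v' with hcv_def
    set cw := G'.connectedComponentMk w' with hcw_def
    set cz := G'.connectedComponentMk z' with hcz_def
    have hne_uv : cu ≠ cv := by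
      intro h
      have hr : G'.Reachable u' v' := (SimpleGraph.ConnectedComponent.eq).mp h
      have := key u' hsubF v' hr
      exact ANAux.u_ne_v hn (congrArg Subtype.val this).symm
    have hne_uw : cu ≠ cw := by
      intro h
      have hr : G'.Reachable u' w' := (SimpleGraph.ConnectedComponent.eq).mp h
      have := key u' hsubF w' hr
      exact ANAux.u_ne_w hn (congrArg Subtype.val this).symm
    have hne_vw : cv ≠ cw := by
      intro h
      have hr : G'.Reachable v' w' := (SimpleGraph.ConnectedComponent.eq).mp h
      have := key v' hsubFv w' hr
      exact ANAux.v_ne_w hn (congrArg Subtype.val this).symm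
    have hne_uz : cu ≠ cz := by
      intro h
      have hr : G'.Reachable u' z' := (SimpleGraph.ConnectedComponent.eq).mp h
      have := key u' hsubF z' hr
      exact hzu (congrArg Subtype.val this)
    have hne_vz : cv ≠ cz := by
      intro h
      have hr : G'.Reachable v' z' := (SimpleGraph.ConnectedComponent.eq).mp h
      have := key v' hsubFv z' hr
      exact hzv (congrArg Subtype.val this)
    have hne_wz : cw ≠ cz := by
      intro h
      have hr : G'.Reachable w' z' := (SimpleGraph.ConnectedComponent.eq).mp h
      have := key w' hsubFw z' hr
      exact hzw (congrArg Subtype.val this)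
    rw [Nat.card_eq_fintype_card]
    have hT : ({cu, cv, cw, cz} : Finset G'.ConnectedComponent).card = 4 := by
      rw [Finset.card_insert_of_notMem (by simp [hne_uv, hne_uw, hne_uz]),
        Finset.card_insert_of_notMem (by simp [hne_vw, hne_vz]),
        Finset.card_insert_of_notMem (by simp [hne_wz]),
        Finset.card_singleton]
    calc 4 = ({cu, cv, cw, cz} : Finset G'.ConnectedComponent).card := hT.symm
      _ ≤ Fintype.card G'.ConnectedComponent := Finset.card_le_univ _
  refine ⟨?_, F, hFcard, hFcomp⟩
  apply Nat.sInf_le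
  exact ⟨F, hFcard, Or.inl hFcomp⟩
end

section
/- For every integer n ≥ 4, the n-dimensional alternating group network AN_n contains no cycle of length 4; that is, there do not exist four distinct vertices v₁, v₂, v₃, v₄ of AN_n such that v₁v₂, v₂v₃, v₃v₄, and v₄v₁ are all edges of AN_n. -/
open SimpleGraph

section ANLemmas

variable {n : ℕ}

def gA (hn : 3 ≤ n) : Fin n → Fin n := fun x =>
  if x.1 = 0 then ⟨2, by omega⟩ else if x.1 = 1 then ⟨0, by omega⟩
  else if x.1 = 2 then ⟨1, by omega⟩ else x

def gB (hn : 3 ≤ n) : Fin n → Fin n := fun x =>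
  if x.1 = 0 then ⟨1, by omega⟩ else if x.1 = 1 then ⟨2, by omega⟩
  else if x.1 = 2 then ⟨0, by omega⟩ else x

def gC (hn : 3 ≤ n) (i : Fin n) : Fin n → Fin n := fun x =>
  if x.1 = 0 then ⟨1, by omega⟩ else if x.1 = 1 then ⟨0, by omega⟩
  else if x.1 = 2 then i else if x = i then ⟨2, by omega⟩ else x

def GoodGen (hn : 3 ≤ n) (g : Fin n → Fin n) : Prop :=
  g = gA hn ∨ g = gB hn ∨ ∃ i : Fin n, 3 ≤ i.1 ∧ g = gC hn i

def IsRot (hn : 3 ≤ n) (g : Fin n → Fin n) : Prop :=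
  g = gA hn ∨ g = gB hn

def GoodNE (hn : 3 ≤ n) (l : Fin n) (g : Fin n → Fin n) : Prop :=
  g = gA hn ∨ g = gB hn ∨ ∃ i : Fin n, 3 ≤ i.1 ∧ i ≠ l ∧ g = gC hn i

lemma pairAB (hn : 3 ≤ n) : ∀ x : Fin n, gA hn (gB hn x) = x := by
  intro x
  simp only [gA, gB]
  split_ifs <;> first | rfl | (apply Fin.ext; simp_all) | (exfalso; omega) | simp_all | (apply Fin.ext; omega)

lemma pairBA (hn : 3 ≤ n) : ∀ x : Fin n, gB hn (gA hn x) = x := by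
  intro x
  simp only [gA, gB]
  split_ifs <;> first | rfl | (apply Fin.ext; simp_all) | (exfalso; omega) | simp_all | (apply Fin.ext; omega)

lemma pairCC (hn : 3 ≤ n) (i : Fin n) (hi : 3 ≤ i.1) :
    ∀ x : Fin n, gC hn i (gC hn i x) = x := by
  intro x
  simp only [gC]
  split_ifs <;>
    first
      | rfl
      | (apply Fin.ext; simp_all [Fin.ext_iff])
      | (exfalso; omega)
      | simp_all [Fin.ext_iff]
      | (apply Fin.ext; omega)
      | (exfalso; simp_all [Fin.ext_iff]; omega)
      | (exfalso; simp_all [Fin.ext_iff])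
      | omega

lemma gC_good (hn : 3 ≤ n) (i : Fin n) (hi : 3 ≤ i.1) : GoodGen hn (gC hn i) :=
  Or.inr (Or.inr ⟨i, hi, rfl⟩)

lemma isRot_good (hn : 3 ≤ n) {g : Fin n → Fin n} (R : IsRot hn g) : GoodGen hn g := by
  rcases R with rfl | rfl
  · exact Or.inl rfl
  · exact Or.inr (Or.inl rfl)

lemma isRot_ne (hn : 3 ≤ n) {l : Fin n} {g : Fin n → Fin n} (R : IsRot hn g) :
    GoodNE hn l g := by
  rcases R with rfl | rfl
  · exact Or.inl rfl
  · exact Or.inr (Or.inl rfl)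

lemma good_inj (hn : 3 ≤ n) {g : Fin n → Fin n} (G : GoodGen hn g) :
    Function.Injective g := by
  rcases G with rfl | rfl | ⟨i, hi, rfl⟩
  · exact Function.LeftInverse.injective (pairBA hn)
  · exact Function.LeftInverse.injective (pairAB hn)
  · exact Function.LeftInverse.injective (pairCC hn i hi)

lemma rotL {g1 g2 g3 g4 : Fin n → Fin n} (inj1 : Function.Injective g1)
    (hid : ∀ x, g1 (g2 (g3 (g4 x))) = x) : ∀ x, g2 (g3 (g4 (g1 x))) = x :=
  fun x => inj1 (hid (g1 x))

lemma toNE (hn : 3 ≤ n) {l : Fin n} {g : Fin n → Fin n} (G : GoodGen hn g)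
    (h : ¬ ∀ x, g (gC hn l x) = x) : GoodNE hn l g := by
  rcases G with rfl | rfl | ⟨i, hi, rfl⟩
  · exact Or.inl rfl
  · exact Or.inr (Or.inl rfl)
  · refine Or.inr (Or.inr ⟨i, hi, ?_, rfl⟩)
    rintro rfl
    exact h (pairCC hn i hi)

lemma toNE' (hn : 3 ≤ n) {l : Fin n} {g : Fin n → Fin n} (G : GoodGen hn g)
    (h : ¬ ∀ x, gC hn l (g x) = x) : GoodNE hn l g := by
  rcases G with rfl | rfl | ⟨i, hi, rfl⟩
  · exact Or.inl rfl
  · exact Or.inr (Or.inl rfl)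
  · refine Or.inr (Or.inr ⟨i, hi, ?_, rfl⟩)
    rintro rfl
    exact h (pairCC hn i hi)

lemma stepFirst (hn : 3 ≤ n) {l : Fin n} (hl : 3 ≤ l.1) {g : Fin n → Fin n}
    (G : GoodNE hn l g) : g ⟨2, by omega⟩ ≠ l ∧ (g ⟨2, by omega⟩).1 ≠ 2 := by
  rcases G with rfl | rfl | ⟨i, hi, hil, rfl⟩ <;>
    simp_all [gA, gB, gC, Fin.ext_iff] <;> omega

lemma stepMid (hn : 3 ≤ n) {l : Fin n} (hl : 3 ≤ l.1) {g : Fin n → Fin n}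
    (G : GoodGen hn g) {v : Fin n} (hvl : v ≠ l) (hv2 : v.1 ≠ 2) : g v ≠ l := by
  have hvl' : v.1 ≠ l.1 := fun h => hvl (Fin.ext h)
  rcases G with rfl | rfl | ⟨i, hi, rfl⟩ <;>
    (simp only [gA, gB, gC]; split_ifs) <;>
    first
      | (intro h; rw [Fin.ext_iff] at h; omega)
      | exact hvl
      | (simp_all [Fin.ext_iff]; omega)
      | simp_all [Fin.ext_iff]
      | omega

lemma stepLast (hn : 3 ≤ n) {l : Fin n} (hl : 3 ≤ l.1) {g : Fin n → Fin n}
    (G : GoodNE hn l g) {v : Fin n} (hvl : v ≠ l) : g v ≠ l := by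
  have hvl' : v.1 ≠ l.1 := fun h => hvl (Fin.ext h)
  rcases G with rfl | rfl | ⟨i, hi, hil, rfl⟩ <;>
    (simp only [gA, gB, gC]; split_ifs) <;>
    first
      | (intro h; rw [Fin.ext_iff] at h; omega)
      | exact hvl
      | exact hil
      | (simp_all [Fin.ext_iff]; omega)
      | simp_all [Fin.ext_iff]
      | omega

lemma core_t (hn : 3 ≤ n) (g1 g2 g3 : Fin n → Fin n) (l : Fin n) (hl : 3 ≤ l.1)
    (G1 : GoodNE hn l g1) (G2 : GoodGen hn g2) (G3 : GoodNE hn l g3)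
    (hid : ∀ x, g1 (g2 (g3 (gC hn l x))) = x) : False := by
  have h2 : gC hn l l = ⟨2, by omega⟩ := by
    simp only [gC]
    split_ifs <;> first | rfl | (exfalso; omega) | simp_all
  have h := hid l
  rw [h2] at h
  have s3 := stepFirst hn hl G3
  have s2 := stepMid hn hl G2 s3.1 s3.2
  have s1 := stepLast hn hl G1 s2
  exact s1 h

lemma pureRot (hn : 3 ≤ n) (g1 g2 g3 g4 : Fin n → Fin n)
    (R1 : IsRot hn g1) (R2 : IsRot hn g2) (R3 : IsRot hn g3) (R4 : IsRot hn g4)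
    (hid : ∀ x, g1 (g2 (g3 (g4 x))) = x)
    (h12 : ¬ ∀ x, g1 (g2 x) = x) (h23 : ¬ ∀ x, g2 (g3 x) = x)
    (h34 : ¬ ∀ x, g3 (g4 x) = x) (h41 : ¬ ∀ x, g4 (g1 x) = x) : False := by
  rcases R1 with rfl | rfl <;> rcases R2 with rfl | rfl <;>
    rcases R3 with rfl | rfl <;> rcases R4 with rfl | rfl <;>
    first
      | exact h12 (pairAB hn)
      | exact h12 (pairBA hn)
      | exact h23 (pairAB hn)
      | exact h23 (pairBA hn)
      | exact h34 (pairAB hn)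
      | exact h34 (pairBA hn)
      | exact h41 (pairAB hn)
      | exact h41 (pairBA hn)
      | (have h0 := hid ⟨0, by omega⟩; simp [gA, gB, Fin.ext_iff] at h0)

lemma core_r432 (hn : 3 ≤ n) (g1 g2 g3 g4 : Fin n → Fin n)
    (G1 : GoodGen hn g1) (R2 : IsRot hn g2) (R3 : IsRot hn g3) (R4 : IsRot hn g4)
    (hid : ∀ x, g1 (g2 (g3 (g4 x))) = x)
    (h12 : ¬ ∀ x, g1 (g2 x) = x) (h23 : ¬ ∀ x, g2 (g3 x) = x)
    (h34 : ¬ ∀ x, g3 (g4 x) = x) (h41 : ¬ ∀ x, g4 (g1 x) = x) : False := by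
  rcases G1 with R1 | R1 | ⟨l, hl, rfl⟩
  · exact pureRot hn g1 g2 g3 g4 (Or.inl R1) R2 R3 R4 hid h12 h23 h34 h41
  · exact pureRot hn g1 g2 g3 g4 (Or.inr R1) R2 R3 R4 hid h12 h23 h34 h41
  · have hid1 := rotL (good_inj hn (gC_good hn l hl)) hid
    exact core_t hn g2 g3 g4 l hl (isRot_ne hn R2) (isRot_good hn R3)
      (toNE hn (isRot_good hn R4) h41) hid1

lemma core_r43 (hn : 3 ≤ n) (g1 g2 g3 g4 : Fin n → Fin n)
    (G1 : GoodGen hn g1) (G2 : GoodGen hn g2) (R3 : IsRot hn g3) (R4 : IsRot hn g4)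
    (hid : ∀ x, g1 (g2 (g3 (g4 x))) = x)
    (h12 : ¬ ∀ x, g1 (g2 x) = x) (h23 : ¬ ∀ x, g2 (g3 x) = x)
    (h34 : ¬ ∀ x, g3 (g4 x) = x) (h41 : ¬ ∀ x, g4 (g1 x) = x) : False := by
  rcases G2 with R2 | R2 | ⟨l, hl, rfl⟩
  · exact core_r432 hn g1 g2 g3 g4 G1 (Or.inl R2) R3 R4 hid h12 h23 h34 h41
  · exact core_r432 hn g1 g2 g3 g4 G1 (Or.inr R2) R3 R4 hid h12 h23 h34 h41
  · have hid2 := rotL (good_inj hn (gC_good hn l hl)) (rotL (good_inj hn G1) hid)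
    exact core_t hn g3 g4 g1 l hl (isRot_ne hn R3) (isRot_good hn R4)
      (toNE hn G1 h12) hid2

lemma core_r4 (hn : 3 ≤ n) (g1 g2 g3 g4 : Fin n → Fin n)
    (G1 : GoodGen hn g1) (G2 : GoodGen hn g2) (G3 : GoodGen hn g3) (R4 : IsRot hn g4)
    (hid : ∀ x, g1 (g2 (g3 (g4 x))) = x)
    (h12 : ¬ ∀ x, g1 (g2 x) = x) (h23 : ¬ ∀ x, g2 (g3 x) = x)
    (h34 : ¬ ∀ x, g3 (g4 x) = x) (h41 : ¬ ∀ x, g4 (g1 x) = x) : False := by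
  rcases G3 with R3 | R3 | ⟨l, hl, rfl⟩
  · exact core_r43 hn g1 g2 g3 g4 G1 G2 (Or.inl R3) R4 hid h12 h23 h34 h41
  · exact core_r43 hn g1 g2 g3 g4 G1 G2 (Or.inr R3) R4 hid h12 h23 h34 h41
  · have hid3 := rotL (good_inj hn (gC_good hn l hl))
      (rotL (good_inj hn G2) (rotL (good_inj hn G1) hid))
    exact core_t hn g4 g1 g2 l hl (isRot_ne hn R4) G1 (toNE hn G2 h23) hid3

lemma core (hn : 3 ≤ n) (g1 g2 g3 g4 : Fin n → Fin n)
    (G1 : GoodGen hn g1) (G2 : GoodGen hn g2) (G3 : GoodGen hn g3) (G4 : GoodGen hn g4)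
    (hid : ∀ x, g1 (g2 (g3 (g4 x))) = x)
    (h12 : ¬ ∀ x, g1 (g2 x) = x) (h23 : ¬ ∀ x, g2 (g3 x) = x)
    (h34 : ¬ ∀ x, g3 (g4 x) = x) (h41 : ¬ ∀ x, g4 (g1 x) = x) : False := by
  rcases G4 with R4 | R4 | ⟨l, hl, rfl⟩
  · exact core_r4 hn g1 g2 g3 g4 G1 G2 G3 (Or.inl R4) hid h12 h23 h34 h41
  · exact core_r4 hn g1 g2 g3 g4 G1 G2 G3 (Or.inr R4) hid h12 h23 h34 h41
  · exact core_t hn g1 g2 g3 l hl (toNE' hn G1 h41) G2 (toNE hn G3 h34) hid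

lemma adj_fun (hn : 3 ≤ n) {p q : Equiv.Perm (Fin n)} (h : ANAdj n p q) :
    ∃ g : Fin n → Fin n, GoodGen hn g ∧ ∀ x, q x = p (g x) := by
  obtain ⟨hn', h⟩ := h
  rcases h with ⟨h1, h2, h3, h4⟩ | ⟨h1, h2, h3, h4⟩ | ⟨i, hi, h1, h2, h3, h4, h5⟩
  · refine ⟨gA hn, Or.inl rfl, fun x => ?_⟩
    simp only [gA]
    split_ifs with e0 e1 e2
    · have hx : x = ⟨0, by omega⟩ := Fin.ext e0
      rw [hx]; exact h3.symm
    · have hx : x = ⟨1, by omega⟩ := Fin.ext e1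
      rw [hx]; exact h1.symm
    · have hx : x = ⟨2, by omega⟩ := Fin.ext e2
      rw [hx]; exact h2.symm
    · exact (h4 x (by omega)).symm
  · refine ⟨gB hn, Or.inr (Or.inl rfl), fun x => ?_⟩
    simp only [gB]
    split_ifs with e0 e1 e2
    · have hx : x = ⟨0, by omega⟩ := Fin.ext e0
      rw [hx]; exact h2.symm
    · have hx : x = ⟨1, by omega⟩ := Fin.ext e1
      rw [hx]; exact h3.symm
    · have hx : x = ⟨2, by omega⟩ := Fin.ext e2
      rw [hx]; exact h1.symm
    · exact (h4 x (by omega)).symm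
  · refine ⟨gC hn i, Or.inr (Or.inr ⟨i, hi, rfl⟩), fun x => ?_⟩
    simp only [gC]
    split_ifs with e0 e1 e2 ei
    · have hx : x = ⟨0, by omega⟩ := Fin.ext e0
      rw [hx]; exact h2.symm
    · have hx : x = ⟨1, by omega⟩ := Fin.ext e1
      rw [hx]; exact h1.symm
    · have hx : x = ⟨2, by omega⟩ := Fin.ext e2
      rw [hx]; exact h4.symm
    · subst ei; exact h3.symm
    · exact (h5 x (by omega) ei).symm

end ANLemmas

/-- For every integer `n ≥ 4`, the alternating group network `AN_n` contains no
cycle of length `4`. -/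
theorem AN_no_four_cycle (n : ℕ) (hn : 4 ≤ n) :
    ¬ ∃ v1 v2 v3 v4 : ANVertex n,
        v1 ≠ v2 ∧ v1 ≠ v3 ∧ v1 ≠ v4 ∧ v2 ≠ v3 ∧ v2 ≠ v4 ∧ v3 ≠ v4 ∧
        (AN n).Adj v1 v2 ∧ (AN n).Adj v2 v3 ∧ (AN n).Adj v3 v4 ∧ (AN n).Adj v4 v1 := by
  rintro ⟨v1, v2, v3, v4, _, h13, _, _, h24, _, a12, a23, a34, a41⟩
  have hn3 : 3 ≤ n := by omega
  obtain ⟨g1, G1, e1⟩ := adj_fun hn3 a12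
  obtain ⟨g2, G2, e2⟩ := adj_fun hn3 a23
  obtain ⟨g3, G3, e3⟩ := adj_fun hn3 a34
  obtain ⟨g4, G4, e4⟩ := adj_fun hn3 a41
  have hid : ∀ x, g1 (g2 (g3 (g4 x))) = x := by
    intro x
    have h : v1.1 x = v1.1 (g1 (g2 (g3 (g4 x)))) :=
      (e4 x).trans ((e3 (g4 x)).trans ((e2 (g3 (g4 x))).trans (e1 (g2 (g3 (g4 x))))))
    exact (v1.1.injective h).symm
  have h12 : ¬ ∀ x, g1 (g2 x) = x := by
    intro hp
    apply h13
    apply Subtype.ext; apply Equiv.ext; intro x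
    calc v1.1 x = v1.1 (g1 (g2 x)) := by rw [hp]
    _ = v2.1 (g2 x) := (e1 _).symm
    _ = v3.1 x := (e2 x).symm
  have h23 : ¬ ∀ x, g2 (g3 x) = x := by
    intro hp
    apply h24
    apply Subtype.ext; apply Equiv.ext; intro x
    calc v2.1 x = v2.1 (g2 (g3 x)) := by rw [hp]
    _ = v3.1 (g3 x) := (e2 _).symm
    _ = v4.1 x := (e3 x).symm
  have h34 : ¬ ∀ x, g3 (g4 x) = x := by
    intro hp
    apply h12
    intro x
    have h := hid x
    rw [hp x] at h
    exact h
  have h41 : ¬ ∀ x, g4 (g1 x) = x := by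
    intro hp
    apply h23
    intro x
    have h := rotL (good_inj hn3 G1) hid x
    rw [hp x] at h
    exact h
  exact core hn3 g1 g2 g3 g4 G1 G2 G3 G4 hid h12 h23 h34 h41
end

section
/- For every integer n ≥ 4, the n-dimensional alternating group network AN_n contains no cycle of length 5; that is, there do not exist five distinct vertices v₁, v₂, v₃, v₄, v₅ of AN_n such that v₁v₂, v₂v₃, v₃v₄, v₄v₅, and v₅v₁ are all edges of AN_n. -/
open SimpleGraph

namespace ANC5
open Equiv
open Equiv

/-! ### Kernel-checkable core over base-8 encoded permutations -/

/-- look up digit `i` (base 8) of `p`. -/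
def dig (p i : Nat) : Nat := p / 8 ^ i % 8

/-- compose base-8-encoded permutations of `{0,…,7}`: `(pcomp f g)(x) = f (g x)`. -/
def pcomp (f g : Nat) : Nat :=
  dig f (dig g 0) + 8 * (dig f (dig g 1) + 8 * (dig f (dig g 2) + 8 * (dig f (dig g 3) +
    8 * (dig f (dig g 4) + 8 * (dig f (dig g 5) + 8 * (dig f (dig g 6) + 8 * dig f (dig g 7)))))))

def letter : Nat → Nat
  | 0 => 16434754 | 1 => 16434705 | 2 => 16434369 | 3 => 16426753
  | 4 => 16336705 | 5 => 15386497 | _ => 5949377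

def idp : Nat := 16434824

def allBelow : Nat → (Nat → Bool) → Bool
  | 0, _ => true
  | n+1, f => f n && allBelow n f

def check : Bool := allBelow 7 fun l1 => allBelow 7 fun l2 => allBelow 7 fun l3 =>
  allBelow 7 fun l4 => allBelow 7 fun l5 =>
    let g1 := letter l1; let g2 := letter l2; let g3 := letter l3
    let g4 := letter l4; let g5 := letter l5
    !(pcomp g1 (pcomp g2 (pcomp g3 (pcomp g4 g5))) == idp) ||
      (pcomp g1 g2 == idp || pcomp g2 g3 == idp || pcomp g3 g4 == idp || pcomp g4 g5 == idp ||
       pcomp g1 (pcomp g2 g3) == idp || pcomp g2 (pcomp g3 g4) == idp ||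
       pcomp g3 (pcomp g4 g5) == idp)

set_option maxRecDepth 1000000 in
set_option maxHeartbeats 100000000 in
lemma check_true : check = true := by decide

lemma allBelow_imp {f : Nat → Bool} : ∀ {n : Nat}, allBelow n f = true → ∀ m, m < n → f m = true := by
  intro n
  induction n with
  | zero => intro _ m hm; omega
  | succ k ih =>
    intro h m hm
    rw [allBelow, Bool.and_eq_true] at h
    rcases Nat.lt_or_ge m k with h' | h'
    · exact ih h.2 m h'
    · have : m = k := by omega
      subst this; exact h.1

lemma dig_lt (a i : ℕ) : dig a i < 8 := Nat.mod_lt _ (by norm_num)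

/-- the value of a permutation of `Fin 8` at a natural number point (junk outside). -/
def pv (p : Perm (Fin 8)) (k : ℕ) : ℕ := if h : k < 8 then (p ⟨k, h⟩).val else 0

lemma pv_lt (p : Perm (Fin 8)) (k : ℕ) : pv p k < 8 := by
  unfold pv; split
  · exact (p _).isLt
  · norm_num

def encF (p : Perm (Fin 8)) : ℕ :=
  pv p 0 + 8 * (pv p 1 + 8 * (pv p 2 + 8 * (pv p 3 +
    8 * (pv p 4 + 8 * (pv p 5 + 8 * (pv p 6 + 8 * pv p 7))))))

lemma dig_encF (p : Perm (Fin 8)) (k : ℕ) (hk : k < 8) : dig (encF p) k = pv p k := by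
  have h0 := pv_lt p 0; have h1 := pv_lt p 1; have h2 := pv_lt p 2; have h3 := pv_lt p 3
  have h4 := pv_lt p 4; have h5 := pv_lt p 5; have h6 := pv_lt p 6; have h7 := pv_lt p 7
  unfold dig encF
  interval_cases k <;> norm_num <;> omega

lemma encF_lt (p : Perm (Fin 8)) : encF p < 16777216 := by
  have h0 := pv_lt p 0; have h1 := pv_lt p 1; have h2 := pv_lt p 2; have h3 := pv_lt p 3
  have h4 := pv_lt p 4; have h5 := pv_lt p 5; have h6 := pv_lt p 6; have h7 := pv_lt p 7
  unfold encF; omega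

lemma pcomp_lt (a b : ℕ) : pcomp a b < 16777216 := by
  unfold pcomp
  have h0 := dig_lt a (dig b 0); have h1 := dig_lt a (dig b 1); have h2 := dig_lt a (dig b 2)
  have h3 := dig_lt a (dig b 3); have h4 := dig_lt a (dig b 4); have h5 := dig_lt a (dig b 5)
  have h6 := dig_lt a (dig b 6); have h7 := dig_lt a (dig b 7)
  omega

set_option maxHeartbeats 2000000 in
lemma dig_pcomp (a b : ℕ) (k : ℕ) (hk : k < 8) : dig (pcomp a b) k = dig a (dig b k) := by
  have h0 := dig_lt a (dig b 0); have h1 := dig_lt a (dig b 1); have h2 := dig_lt a (dig b 2)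
  have h3 := dig_lt a (dig b 3); have h4 := dig_lt a (dig b 4); have h5 := dig_lt a (dig b 5)
  have h6 := dig_lt a (dig b 6); have h7 := dig_lt a (dig b 7)
  interval_cases k <;>
  · unfold pcomp
    generalize dig a (dig b 0) = c0 at h0 ⊢
    generalize dig a (dig b 1) = c1 at h1 ⊢
    generalize dig a (dig b 2) = c2 at h2 ⊢
    generalize dig a (dig b 3) = c3 at h3 ⊢
    generalize dig a (dig b 4) = c4 at h4 ⊢
    generalize dig a (dig b 5) = c5 at h5 ⊢
    generalize dig a (dig b 6) = c6 at h6 ⊢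
    generalize dig a (dig b 7) = c7 at h7 ⊢
    unfold dig
    norm_num
    omega

lemma digits_ext {a b : ℕ} (ha : a < 16777216) (hb : b < 16777216)
    (h : ∀ k, k < 8 → dig a k = dig b k) : a = b := by
  have h0 := h 0 (by norm_num); have h1 := h 1 (by norm_num); have h2 := h 2 (by norm_num)
  have h3 := h 3 (by norm_num); have h4 := h 4 (by norm_num); have h5 := h 5 (by norm_num)
  have h6 := h 6 (by norm_num); have h7 := h 7 (by norm_num)
  unfold dig at *
  norm_num at *
  omega
open Equiv

lemma encF_mul (p q : Perm (Fin 8)) : encF (p * q) = pcomp (encF p) (encF q) := by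
  apply digits_ext (encF_lt _) (pcomp_lt _ _)
  intro k hk
  rw [dig_pcomp _ _ k hk, dig_encF _ k hk, dig_encF _ k hk]
  unfold pv
  rw [dif_pos hk, dif_pos hk]
  have h8 : (q ⟨k, hk⟩).val < 8 := (q _).isLt
  rw [dig_encF p _ h8]
  unfold pv
  rw [dif_pos h8]
  simp [Equiv.Perm.mul_apply]

lemma encF_inj {p q : Perm (Fin 8)} (h : encF p = encF q) : p = q := by
  ext k
  have hk := k.isLt
  have h1 : pv p k.val = pv q k.val := by
    rw [← dig_encF p k.val hk, ← dig_encF q k.val hk, h]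
  unfold pv at h1
  rw [dif_pos hk, dif_pos hk] at h1
  simpa [Fin.ext_iff] using h1

/-- the 3-cycle generator on `Fin 8`. -/
def A8 : Perm (Fin 8) := Equiv.swap 0 2 * Equiv.swap 1 2

/-- the swap-type generators on `Fin 8`. -/
def T8 (j : Fin 8) : Perm (Fin 8) := Equiv.swap 0 1 * Equiv.swap 2 j

def F : Fin 7 → Perm (Fin 8)
  | 0 => A8 | 1 => A8⁻¹ | 2 => T8 3 | 3 => T8 4 | 4 => T8 5 | 5 => T8 6 | 6 => T8 7

lemma F_zero : F 0 = A8 := rfl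
lemma F_one : F 1 = A8⁻¹ := rfl

lemma encF_F (l : Fin 7) : encF (F l) = letter l.val := by
  fin_cases l <;> decide

lemma encF_one : encF 1 = idp := by decide

lemma T8_mem (j : Fin 8) (hj : 3 ≤ j.val) : ∃ l : Fin 7, F l = T8 j := by
  fin_cases j
  · exact absurd hj (by decide)
  · exact absurd hj (by decide)
  · exact absurd hj (by decide)
  · exact ⟨2, rfl⟩
  · exact ⟨3, rfl⟩
  · exact ⟨4, rfl⟩
  · exact ⟨5, rfl⟩
  · exact ⟨6, rfl⟩

lemma pc_eq (x y : Perm (Fin 8)) (h : pcomp (encF x) (encF y) = idp) : x * y = 1 := by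
  apply encF_inj
  rw [encF_mul, h, encF_one]

lemma core8 (l1 l2 l3 l4 l5 : Fin 7)
    (h : F l1 * (F l2 * (F l3 * (F l4 * F l5))) = 1) :
    F l1 * F l2 = 1 ∨ F l2 * F l3 = 1 ∨ F l3 * F l4 = 1 ∨ F l4 * F l5 = 1 ∨
    F l1 * (F l2 * F l3) = 1 ∨ F l2 * (F l3 * F l4) = 1 ∨ F l3 * (F l4 * F l5) = 1 := by
  have hb := allBelow_imp (allBelow_imp (allBelow_imp (allBelow_imp (allBelow_imp
    check_true l1.val l1.isLt) l2.val l2.isLt) l3.val l3.isLt) l4.val l4.isLt) l5.val l5.isLt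
  simp only [Bool.or_eq_true, Bool.not_eq_true', beq_eq_false_iff_ne, ne_eq, beq_iff_eq] at hb
  have he : pcomp (letter l1.val) (pcomp (letter l2.val) (pcomp (letter l3.val)
      (pcomp (letter l4.val) (letter l5.val)))) = idp := by
    rw [← encF_F, ← encF_F, ← encF_F, ← encF_F, ← encF_F,
      ← encF_mul, ← encF_mul, ← encF_mul, ← encF_mul, h, encF_one]
  rcases hb with hb | hb
  · exact absurd he hb
  · rw [← encF_F l1, ← encF_F l2, ← encF_F l3, ← encF_F l4, ← encF_F l5] at hb
    rcases hb with ((((((hb | hb) | hb) | hb) | hb) | hb) | hb)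
    · exact Or.inl (pc_eq _ _ hb)
    · exact Or.inr (Or.inl (pc_eq _ _ hb))
    · exact Or.inr (Or.inr (Or.inl (pc_eq _ _ hb)))
    · exact Or.inr (Or.inr (Or.inr (Or.inl (pc_eq _ _ hb))))
    · refine Or.inr (Or.inr (Or.inr (Or.inr (Or.inl ?_))))
      apply encF_inj; rw [encF_mul, encF_mul, hb, encF_one]
    · refine Or.inr (Or.inr (Or.inr (Or.inr (Or.inr (Or.inl ?_)))))
      apply encF_inj; rw [encF_mul, encF_mul, hb, encF_one]
    · refine Or.inr (Or.inr (Or.inr (Or.inr (Or.inr (Or.inr ?_)))))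
      apply encF_inj; rw [encF_mul, encF_mul, hb, encF_one]
open Equiv

/-- The 3-cycle generator of `AN_n` (as a permutation of positions). -/
def An (n : ℕ) (hn : 4 ≤ n) : Perm (Fin n) :=
  Equiv.swap ⟨0, by omega⟩ ⟨2, by omega⟩ * Equiv.swap ⟨1, by omega⟩ ⟨2, by omega⟩

/-- The swap-type generator of `AN_n` (as a permutation of positions). -/
def Tn (n : ℕ) (hn : 4 ≤ n) (i : Fin n) : Perm (Fin n) :=
  Equiv.swap ⟨0, by omega⟩ ⟨1, by omega⟩ * Equiv.swap ⟨2, by omega⟩ i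

/-- membership in the generating set. -/
def Gn (n : ℕ) (hn : 4 ≤ n) (g : Perm (Fin n)) : Prop :=
  g = An n hn ∨ g = (An n hn)⁻¹ ∨ ∃ i : Fin n, 3 ≤ i.val ∧ g = Tn n hn i

variable {n : ℕ}

lemma An_apply_0 (hn : 4 ≤ n) (h0 : (0:ℕ) < n) (h2 : (2:ℕ) < n) :
    An n hn ⟨0, h0⟩ = ⟨2, h2⟩ := by
  simp only [An, Equiv.Perm.mul_apply, Equiv.swap_apply_def]
  split_ifs <;> simp_all [Fin.ext_iff] <;> try omega

lemma An_apply_1 (hn : 4 ≤ n) (h1 : (1:ℕ) < n) (h0 : (0:ℕ) < n) :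
    An n hn ⟨1, h1⟩ = ⟨0, h0⟩ := by
  simp only [An, Equiv.Perm.mul_apply, Equiv.swap_apply_def]
  split_ifs <;> simp_all [Fin.ext_iff] <;> try omega

lemma An_apply_2 (hn : 4 ≤ n) (h2 : (2:ℕ) < n) (h1 : (1:ℕ) < n) :
    An n hn ⟨2, h2⟩ = ⟨1, h1⟩ := by
  simp only [An, Equiv.Perm.mul_apply, Equiv.swap_apply_def]
  split_ifs <;> simp_all [Fin.ext_iff] <;> try omega

lemma An_apply_ge (hn : 4 ≤ n) (j : Fin n) (hj : 3 ≤ j.val) : An n hn j = j := by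
  simp only [An, Equiv.Perm.mul_apply, Equiv.swap_apply_def]
  split_ifs <;> simp_all [Fin.ext_iff] <;> try omega

lemma Tn_apply_0 (hn : 4 ≤ n) {i : Fin n} (hi : 3 ≤ i.val) (h0 : (0:ℕ) < n) (h1 : (1:ℕ) < n) :
    Tn n hn i ⟨0, h0⟩ = ⟨1, h1⟩ := by
  simp only [Tn, Equiv.Perm.mul_apply, Equiv.swap_apply_def]
  split_ifs <;> simp_all [Fin.ext_iff] <;> try omega

lemma Tn_apply_1 (hn : 4 ≤ n) {i : Fin n} (hi : 3 ≤ i.val) (h1 : (1:ℕ) < n) (h0 : (0:ℕ) < n) :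
    Tn n hn i ⟨1, h1⟩ = ⟨0, h0⟩ := by
  simp only [Tn, Equiv.Perm.mul_apply, Equiv.swap_apply_def]
  split_ifs <;> simp_all [Fin.ext_iff] <;> try omega

lemma Tn_apply_2 (hn : 4 ≤ n) {i : Fin n} (hi : 3 ≤ i.val) (h2 : (2:ℕ) < n) :
    Tn n hn i ⟨2, h2⟩ = i := by
  simp only [Tn, Equiv.Perm.mul_apply, Equiv.swap_apply_def]
  split_ifs <;> simp_all [Fin.ext_iff] <;> try omega

lemma Tn_apply_i (hn : 4 ≤ n) {i : Fin n} (hi : 3 ≤ i.val) (h2 : (2:ℕ) < n) :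
    Tn n hn i i = ⟨2, h2⟩ := by
  simp only [Tn, Equiv.Perm.mul_apply, Equiv.swap_apply_def]
  split_ifs <;> simp_all [Fin.ext_iff] <;> try omega

lemma Tn_apply_ge (hn : 4 ≤ n) {i : Fin n} (hi : 3 ≤ i.val) (j : Fin n) (hj : 3 ≤ j.val)
    (hij : j ≠ i) : Tn n hn i j = j := by
  simp only [Tn, Equiv.Perm.mul_apply, Equiv.swap_apply_def]
  split_ifs <;> simp_all [Fin.ext_iff] <;> try omega

lemma fin_cases3 (j : Fin n) (hl : j.val < 3) (h0 : (0:ℕ) < n) (h1 : (1:ℕ) < n)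
    (h2 : (2:ℕ) < n) : j = ⟨0, h0⟩ ∨ j = ⟨1, h1⟩ ∨ j = ⟨2, h2⟩ := by
  have hv : j.val = 0 ∨ j.val = 1 ∨ j.val = 2 := by omega
  rcases hv with hv | hv | hv
  exacts [Or.inl (Fin.ext hv), Or.inr (Or.inl (Fin.ext hv)), Or.inr (Or.inr (Fin.ext hv))]

/-- each edge of `AN_n` is given by right multiplication by a generator. -/
lemma step (hn : 4 ≤ n) {p q : Perm (Fin n)} (h : ANAdj n p q) :
    ∃ g : Perm (Fin n), Gn n hn g ∧ q = p * g := by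
  have h0 : (0:ℕ) < n := by omega
  have h1 : (1:ℕ) < n := by omega
  have h2 : (2:ℕ) < n := by omega
  obtain ⟨h3n, hc⟩ := h
  rcases hc with ⟨e1, e2, e3, e4⟩ | ⟨e1, e2, e3, e4⟩ | ⟨i, hi, e1, e2, e3, e4, e5⟩
  · refine ⟨An n hn, Or.inl rfl, ?_⟩
    refine Equiv.ext fun j => ?_
    rw [Equiv.Perm.mul_apply]
    rcases Nat.lt_or_ge j.val 3 with hl | hl
    · rcases fin_cases3 j hl h0 h1 h2 with rfl | rfl | rfl
      · rw [An_apply_0 hn h0 h2]; exact e3.symm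
      · rw [An_apply_1 hn h1 h0]; exact e1.symm
      · rw [An_apply_2 hn h2 h1]; exact e2.symm
    · rw [An_apply_ge hn j hl]; exact (e4 j hl).symm
  · refine ⟨(An n hn)⁻¹, Or.inr (Or.inl rfl), ?_⟩
    refine Equiv.ext fun j => ?_
    rw [Equiv.Perm.mul_apply]
    rcases Nat.lt_or_ge j.val 3 with hl | hl
    · rcases fin_cases3 j hl h0 h1 h2 with rfl | rfl | rfl
      · have : (An n hn)⁻¹ ⟨0, h0⟩ = ⟨1, h1⟩ := by
          rw [Equiv.Perm.inv_eq_iff_eq, An_apply_1 hn h1 h0]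
        rw [this]; exact e2.symm
      · have : (An n hn)⁻¹ ⟨1, h1⟩ = ⟨2, h2⟩ := by
          rw [Equiv.Perm.inv_eq_iff_eq, An_apply_2 hn h2 h1]
        rw [this]; exact e3.symm
      · have : (An n hn)⁻¹ ⟨2, h2⟩ = ⟨0, h0⟩ := by
          rw [Equiv.Perm.inv_eq_iff_eq, An_apply_0 hn h0 h2]
        rw [this]; exact e1.symm
    · have : (An n hn)⁻¹ j = j := by
        rw [Equiv.Perm.inv_eq_iff_eq, An_apply_ge hn j hl]
      rw [this]; exact (e4 j hl).symm
  · refine ⟨Tn n hn i, Or.inr (Or.inr ⟨i, hi, rfl⟩), ?_⟩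
    refine Equiv.ext fun j => ?_
    rw [Equiv.Perm.mul_apply]
    by_cases hji : j = i
    · subst hji
      rw [Tn_apply_i hn hi h2]; exact e3.symm
    · rcases Nat.lt_or_ge j.val 3 with hl | hl
      · rcases fin_cases3 j hl h0 h1 h2 with rfl | rfl | rfl
        · rw [Tn_apply_0 hn hi h0 h1]; exact e2.symm
        · rw [Tn_apply_1 hn hi h1 h0]; exact e1.symm
        · rw [Tn_apply_2 hn hi h2]; exact e4.symm
      · rw [Tn_apply_ge hn hi j hl hji]; exact (e5 j hl hji).symm

lemma viaEmbedding_swap {α β : Type*} [DecidableEq α] [DecidableEq β] (e : α ↪ β) (a b : α) :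
    (Equiv.swap a b).viaEmbedding e = Equiv.swap (e a) (e b) := by
  ext y
  by_cases hy : y ∈ Set.range e
  · obtain ⟨x, rfl⟩ := hy
    rw [Equiv.Perm.viaEmbedding_apply]
    exact (e.injective.swap_apply a b x).symm
  · rw [Equiv.Perm.viaEmbedding_apply_of_notMem _ _ y hy,
      Equiv.swap_apply_of_ne_of_ne (fun hc => hy ⟨a, hc.symm⟩) (fun hc => hy ⟨b, hc.symm⟩)]
open Equiv

variable {n : ℕ}

lemma Gn_idx (hn : 4 ≤ n) {g : Perm (Fin n)} (H : Gn n hn g) :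
    ∃ j : Fin n, 3 ≤ j.val ∧ (g = An n hn ∨ g = (An n hn)⁻¹ ∨ g = Tn n hn j) := by
  rcases H with h | h | ⟨i, hi, h⟩
  · exact ⟨⟨3, by omega⟩, by simp, Or.inl h⟩
  · exact ⟨⟨3, by omega⟩, by simp, Or.inr (Or.inl h)⟩
  · exact ⟨i, hi, Or.inr (Or.inr h)⟩

lemma embed_big (hn : 4 ≤ n) (u : Finset (Fin n)) (huB : ∀ x ∈ u, 3 ≤ x.val)
    (hu5 : u.card = 5) :
    ∃ f : Fin 8 ↪ Fin n,
      f 0 = ⟨0, by omega⟩ ∧ f 1 = ⟨1, by omega⟩ ∧ f 2 = ⟨2, by omega⟩ ∧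
      ∀ i ∈ u, ∃ k : Fin 8, 3 ≤ k.val ∧ f k = i := by
  have e5 := u.orderIsoOfFin hu5
  have hinj : Function.Injective (fun k : Fin 8 =>
      if h : (k : ℕ) < 3 then (⟨k, by omega⟩ : Fin n) else (e5 ⟨k.val - 3, by omega⟩ : Fin n)) := by
    intro a b hab
    simp only at hab
    by_cases ha : (a : ℕ) < 3 <;> by_cases hb : (b : ℕ) < 3
    · rw [dif_pos ha, dif_pos hb] at hab
      exact Fin.ext (by simpa [Fin.ext_iff] using hab)
    · rw [dif_pos ha, dif_neg hb] at hab
      exfalso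
      have h3 : 3 ≤ ((e5 ⟨b.val - 3, by omega⟩ : u) : Fin n).val := huB _ (e5 _).2
      rw [← hab] at h3
      simp at h3
      omega
    · rw [dif_neg ha, dif_pos hb] at hab
      exfalso
      have h3 : 3 ≤ ((e5 ⟨a.val - 3, by omega⟩ : u) : Fin n).val := huB _ (e5 _).2
      rw [hab] at h3
      simp at h3
      omega
    · rw [dif_neg ha, dif_neg hb] at hab
      have h1 := e5.injective (Subtype.coe_injective hab)
      have h2 : a.val - 3 = b.val - 3 := by simpa [Fin.ext_iff] using h1
      exact Fin.ext (by omega)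
  refine ⟨⟨_, hinj⟩, ?_, ?_, ?_, ?_⟩
  · simp only [Function.Embedding.coeFn_mk]
    rw [dif_pos (by norm_num)]
    try exact Fin.ext (by simp)
  · simp only [Function.Embedding.coeFn_mk]
    rw [dif_pos (by norm_num)]
    try exact Fin.ext (by simp)
  · simp only [Function.Embedding.coeFn_mk]
    rw [dif_pos (by norm_num)]
    try exact Fin.ext (by simp)
  · intro i hiu
    refine ⟨⟨(e5.symm ⟨i, hiu⟩).val + 3, by have := (e5.symm ⟨i, hiu⟩).isLt; omega⟩, by simp, ?_⟩
    simp only [Function.Embedding.coeFn_mk]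
    rw [dif_neg (by simp)]
    have hk : (⟨(⟨(e5.symm ⟨i, hiu⟩).val + 3, by have := (e5.symm ⟨i, hiu⟩).isLt; omega⟩ : Fin 8).val - 3,
        by have := (e5.symm ⟨i, hiu⟩).isLt; omega⟩ : Fin 5) = e5.symm ⟨i, hiu⟩ := Fin.ext (by simp)
    rw [hk, OrderIso.apply_symm_apply]

/-- cast embedding into `Fin 8`. -/
def castEmb (n : ℕ) (h : n ≤ 8) : Fin n ↪ Fin 8 :=
  ⟨fun x => ⟨x.val, by omega⟩, fun a b hab => Fin.ext (by simpa [Fin.ext_iff] using hab)⟩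

lemma castEmb_apply (n : ℕ) (h : n ≤ 8) (x : Fin n) : castEmb n h x = ⟨x.val, by omega⟩ := rfl

lemma word (hn : 4 ≤ n) {g1 g2 g3 g4 g5 : Perm (Fin n)}
    (H1 : Gn n hn g1) (H2 : Gn n hn g2) (H3 : Gn n hn g3) (H4 : Gn n hn g4) (H5 : Gn n hn g5)
    (Hp : g1 * (g2 * (g3 * (g4 * g5))) = 1) :
    g1 * g2 = 1 ∨ g2 * g3 = 1 ∨ g3 * g4 = 1 ∨ g4 * g5 = 1 ∨
    g1 * (g2 * g3) = 1 ∨ g2 * (g3 * g4) = 1 ∨ g3 * (g4 * g5) = 1 := by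
  rcases Nat.lt_or_ge n 8 with hs | hb
  · -- small case: push everything into `Fin 8`
    have hn8 : n ≤ 8 := by omega
    set e := castEmb n hn8 with he
    have hswap : ∀ a b : Fin n, Equiv.Perm.viaEmbeddingHom e (Equiv.swap a b)
        = Equiv.swap (e a) (e b) := fun a b => by
      rw [Equiv.Perm.viaEmbeddingHom_apply, viaEmbedding_swap]
    have hA : Equiv.Perm.viaEmbeddingHom e (An n hn) = A8 := by
      rw [An, map_mul, hswap, hswap]
      have e0 : e ⟨0, by omega⟩ = (0 : Fin 8) := Fin.ext (by simp [he, castEmb_apply])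
      have e1 : e ⟨1, by omega⟩ = (1 : Fin 8) := Fin.ext (by simp [he, castEmb_apply])
      have e2 : e ⟨2, by omega⟩ = (2 : Fin 8) := Fin.ext (by simp [he, castEmb_apply])
      rw [e0, e1, e2, A8]
    have key : ∀ g : Perm (Fin n), Gn n hn g →
        ∃ l : Fin 7, Equiv.Perm.viaEmbeddingHom e g = F l := by
      intro g Hg
      rcases Hg with rfl | rfl | ⟨i, hi, rfl⟩
      · exact ⟨0, by rw [F_zero, hA]⟩
      · exact ⟨1, by rw [F_one, map_inv, hA]⟩
      · have hT : Equiv.Perm.viaEmbeddingHom e (Tn n hn i) = T8 (e i) := by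
          rw [Tn, map_mul, hswap, hswap]
          have e0 : e ⟨0, by omega⟩ = (0 : Fin 8) := Fin.ext (by simp [he, castEmb_apply])
          have e1 : e ⟨1, by omega⟩ = (1 : Fin 8) := Fin.ext (by simp [he, castEmb_apply])
          have e2 : e ⟨2, by omega⟩ = (2 : Fin 8) := Fin.ext (by simp [he, castEmb_apply])
          rw [e0, e1, e2, T8]
        obtain ⟨l, hl⟩ := T8_mem (e i) (by simpa [he, castEmb_apply] using hi)
        exact ⟨l, by rw [hT, ← hl]⟩
    obtain ⟨l1, hl1⟩ := key g1 H1
    obtain ⟨l2, hl2⟩ := key g2 H2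
    obtain ⟨l3, hl3⟩ := key g3 H3
    obtain ⟨l4, hl4⟩ := key g4 H4
    obtain ⟨l5, hl5⟩ := key g5 H5
    have hw : F l1 * (F l2 * (F l3 * (F l4 * F l5))) = 1 := by
      rw [← hl1, ← hl2, ← hl3, ← hl4, ← hl5, ← map_mul, ← map_mul, ← map_mul, ← map_mul, Hp,
        map_one]
    have inj := Equiv.Perm.viaEmbeddingHom_injective e
    rcases core8 l1 l2 l3 l4 l5 hw with hc | hc | hc | hc | hc | hc | hc
    · exact Or.inl (inj (by rw [map_mul, hl1, hl2, hc, map_one]))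
    · exact Or.inr (Or.inl (inj (by rw [map_mul, hl2, hl3, hc, map_one])))
    · exact Or.inr (Or.inr (Or.inl (inj (by rw [map_mul, hl3, hl4, hc, map_one]))))
    · exact Or.inr (Or.inr (Or.inr (Or.inl (inj (by rw [map_mul, hl4, hl5, hc, map_one])))))
    · exact Or.inr (Or.inr (Or.inr (Or.inr (Or.inl (inj
        (by rw [map_mul, map_mul, hl1, hl2, hl3, hc, map_one]))))))
    · exact Or.inr (Or.inr (Or.inr (Or.inr (Or.inr (Or.inl (inj
        (by rw [map_mul, map_mul, hl2, hl3, hl4, hc, map_one])))))))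
    · exact Or.inr (Or.inr (Or.inr (Or.inr (Or.inr (Or.inr (inj
        (by rw [map_mul, map_mul, hl3, hl4, hl5, hc, map_one])))))))
  · -- big case: pull the letters back from `Fin 8`
    obtain ⟨j1, hj1, K1⟩ := Gn_idx hn H1
    obtain ⟨j2, hj2, K2⟩ := Gn_idx hn H2
    obtain ⟨j3, hj3, K3⟩ := Gn_idx hn H3
    obtain ⟨j4, hj4, K4⟩ := Gn_idx hn H4
    obtain ⟨j5, hj5, K5⟩ := Gn_idx hn H5
    have hSB : ({j1, j2, j3, j4, j5} : Finset (Fin n)) ⊆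
        Finset.univ.filter (fun x => 3 ≤ x.val) := by
      intro x hx
      simp only [Finset.mem_insert, Finset.mem_singleton] at hx
      rcases hx with rfl | rfl | rfl | rfl | rfl <;> simp [Finset.mem_filter] <;> assumption
    have hS5 : ({j1, j2, j3, j4, j5} : Finset (Fin n)).card ≤ 5 := by
      refine (Finset.card_insert_le _ _).trans (Nat.succ_le_succ ?_)
      refine (Finset.card_insert_le _ _).trans (Nat.succ_le_succ ?_)
      refine (Finset.card_insert_le _ _).trans (Nat.succ_le_succ ?_)
      refine (Finset.card_insert_le _ _).trans (Nat.succ_le_succ ?_)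
      simp
    have h5B : 5 ≤ (Finset.univ.filter (fun x : Fin n => 3 ≤ x.val)).card := by
      calc (5 : ℕ) = (Finset.univ : Finset (Fin 5)).card := by simp
        _ ≤ _ := Finset.card_le_card_of_injOn (fun k : Fin 5 => (⟨k.val + 3, by omega⟩ : Fin n))
            (fun a _ => by simp [Finset.mem_filter])
            (fun a _ b _ hab => Fin.ext (by simpa [Fin.ext_iff] using hab))
    obtain ⟨u, hSu, huB, hu5⟩ := Finset.exists_subsuperset_card_eq hSB hS5 h5B
    obtain ⟨f, hf0, hf1, hf2, hfu⟩ := embed_big hn u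
      (fun x hx => by simpa using (Finset.mem_filter.mp (huB hx)).2) hu5
    have hswap : ∀ a b : Fin 8, Equiv.Perm.viaEmbeddingHom f (Equiv.swap a b)
        = Equiv.swap (f a) (f b) := fun a b => by
      rw [Equiv.Perm.viaEmbeddingHom_apply, viaEmbedding_swap]
    have hA : Equiv.Perm.viaEmbeddingHom f A8 = An n hn := by
      rw [A8, map_mul, hswap, hswap, hf0, hf1, hf2, An]
    have key : ∀ (g : Perm (Fin n)) (j : Fin n),
        (g = An n hn ∨ g = (An n hn)⁻¹ ∨ g = Tn n hn j) → j ∈ u →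
        ∃ l : Fin 7, Equiv.Perm.viaEmbeddingHom f (F l) = g := by
      intro g j Hg hju
      rcases Hg with rfl | rfl | rfl
      · exact ⟨0, by rw [F_zero, hA]⟩
      · exact ⟨1, by rw [F_one, map_inv, hA]⟩
      · obtain ⟨k, hk3, hkj⟩ := hfu j hju
        obtain ⟨l, hl⟩ := T8_mem k hk3
        refine ⟨l, ?_⟩
        rw [hl, T8, map_mul, hswap, hswap, hf0, hf1, hf2, hkj, Tn]
    have mem1 : j1 ∈ u := hSu (by simp)
    have mem2 : j2 ∈ u := hSu (by simp)
    have mem3 : j3 ∈ u := hSu (by simp)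
    have mem4 : j4 ∈ u := hSu (by simp)
    have mem5 : j5 ∈ u := hSu (by simp)
    obtain ⟨l1, hl1⟩ := key g1 j1 K1 mem1
    obtain ⟨l2, hl2⟩ := key g2 j2 K2 mem2
    obtain ⟨l3, hl3⟩ := key g3 j3 K3 mem3
    obtain ⟨l4, hl4⟩ := key g4 j4 K4 mem4
    obtain ⟨l5, hl5⟩ := key g5 j5 K5 mem5
    have hw : F l1 * (F l2 * (F l3 * (F l4 * F l5))) = 1 := by
      apply Equiv.Perm.viaEmbeddingHom_injective f
      rw [map_mul, map_mul, map_mul, map_mul, hl1, hl2, hl3, hl4, hl5, Hp, map_one]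
    rcases core8 l1 l2 l3 l4 l5 hw with hc | hc | hc | hc | hc | hc | hc
    · exact Or.inl (by rw [← hl1, ← hl2, ← map_mul, hc, map_one])
    · exact Or.inr (Or.inl (by rw [← hl2, ← hl3, ← map_mul, hc, map_one]))
    · exact Or.inr (Or.inr (Or.inl (by rw [← hl3, ← hl4, ← map_mul, hc, map_one])))
    · exact Or.inr (Or.inr (Or.inr (Or.inl (by rw [← hl4, ← hl5, ← map_mul, hc, map_one]))))
    · exact Or.inr (Or.inr (Or.inr (Or.inr (Or.inl
        (by rw [← hl1, ← hl2, ← hl3, ← map_mul, ← map_mul, hc, map_one])))))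
    · exact Or.inr (Or.inr (Or.inr (Or.inr (Or.inr (Or.inl
        (by rw [← hl2, ← hl3, ← hl4, ← map_mul, ← map_mul, hc, map_one]))))))
    · exact Or.inr (Or.inr (Or.inr (Or.inr (Or.inr (Or.inr
        (by rw [← hl3, ← hl4, ← hl5, ← map_mul, ← map_mul, hc, map_one]))))))
end ANC5

/-- For every integer `n ≥ 4`, the alternating group network `AN_n` contains no
cycle of length `5`. -/
theorem AN_no_five_cycle (n : ℕ) (hn : 4 ≤ n) :
    ¬ ∃ v1 v2 v3 v4 v5 : ANVertex n,
        v1 ≠ v2 ∧ v1 ≠ v3 ∧ v1 ≠ v4 ∧ v1 ≠ v5 ∧ v2 ≠ v3 ∧ v2 ≠ v4 ∧ v2 ≠ v5 ∧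
        v3 ≠ v4 ∧ v3 ≠ v5 ∧ v4 ≠ v5 ∧
        (AN n).Adj v1 v2 ∧ (AN n).Adj v2 v3 ∧ (AN n).Adj v3 v4 ∧ (AN n).Adj v4 v5 ∧
        (AN n).Adj v5 v1 := by

  rintro ⟨v1, v2, v3, v4, v5, h12, h13, h14, h15, h23, h24, h25, h34, h35, h45,
    e12, e23, e34, e45, e51⟩
  obtain ⟨g1, H1, hv2⟩ := ANC5.step hn e12
  obtain ⟨g2, H2, hv3⟩ := ANC5.step hn e23
  obtain ⟨g3, H3, hv4⟩ := ANC5.step hn e34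
  obtain ⟨g4, H4, hv5⟩ := ANC5.step hn e45
  obtain ⟨g5, H5, hv1⟩ := ANC5.step hn e51
  have Hp : g1 * (g2 * (g3 * (g4 * g5))) = 1 := by
    have hcyc : v1.1 * (g1 * (g2 * (g3 * (g4 * g5)))) = v1.1 * 1 := by
      rw [mul_one]
      conv_rhs => rw [hv1, hv5, hv4, hv3, hv2]
      simp [mul_assoc]
    exact mul_left_cancel hcyc
  rcases ANC5.word hn H1 H2 H3 H4 H5 Hp with hc | hc | hc | hc | hc | hc | hc
  · exact h13 (Subtype.ext (by rw [hv3, hv2, mul_assoc, hc, mul_one])).symm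
  · exact h24 (Subtype.ext (by rw [hv4, hv3, mul_assoc, hc, mul_one])).symm
  · exact h35 (Subtype.ext (by rw [hv5, hv4, mul_assoc, hc, mul_one])).symm
  · exact h14 (Subtype.ext (by rw [hv1, hv5, mul_assoc, hc, mul_one]))
  · exact h14 (Subtype.ext (by rw [hv4, hv3, hv2, mul_assoc, mul_assoc, hc, mul_one])).symm
  · exact h25 (Subtype.ext (by rw [hv5, hv4, hv3, mul_assoc, mul_assoc, hc, mul_one])).symm
  · exact h13 (Subtype.ext (by rw [hv1, hv5, hv4, mul_assoc, mul_assoc, hc, mul_one]))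
end

section
/- For every integer n ≥ 4 and every i ∈ {1,…,n}, any two distinct vertices of the subnetwork AN_n^i have different out-neighbors; that is, if x and y are distinct vertices of AN_n with x_n = y_n = i, and x′ and y′ are neighbors of x and y respectively with x′_n ≠ i and y′_n ≠ i, then x′ ≠ y′. -/
open SimpleGraph

lemma AN_out_edge (n : ℕ) (hn : 3 < n) (i : Fin n) (x x' : ANVertex n)
    (hx : x.1 ⟨n - 1, by omega⟩ = i)
    (hxx' : (AN n).Adj x x')
    (hx' : x'.1 ⟨n - 1, by omega⟩ ≠ i) :
    x.1 ⟨0, by omega⟩ = x'.1 ⟨1, by omega⟩ ∧ x.1 ⟨1, by omega⟩ = x'.1 ⟨0, by omega⟩ ∧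
    x.1 ⟨2, by omega⟩ = x'.1 ⟨n - 1, by omega⟩ ∧ x.1 ⟨n - 1, by omega⟩ = x'.1 ⟨2, by omega⟩ ∧
    ∀ j : Fin n, 3 ≤ (j : ℕ) → (j : ℕ) ≠ n - 1 → x.1 j = x'.1 j := by
  obtain ⟨h3, h⟩ := hxx'
  rcases h with ⟨h1, h2, h3', h4⟩ | ⟨h1, h2, h3', h4⟩ | ⟨k, hk, h1, h2, h3', h4, h5⟩
  · exact absurd (hx ▸ (h4 ⟨n - 1, by omega⟩ (by simp; omega)).symm) hx'
  · exact absurd (hx ▸ (h4 ⟨n - 1, by omega⟩ (by simp; omega)).symm) hx'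
  · by_cases hkn : (k : ℕ) = n - 1
    · have hke : k = ⟨n - 1, by omega⟩ := Fin.ext hkn
      exact ⟨h1, h2, hke ▸ h3', hke ▸ h4,
        fun j hj1 hj2 => h5 j hj1 (by rw [hke, Ne, Fin.ext_iff]; exact hj2)⟩
    · exact absurd (hx ▸ (h5 ⟨n - 1, by omega⟩ (by simp; omega)
        (by simp [Fin.ext_iff]; omega)).symm) hx'

/-- For every `n ≥ 4` and every `i`, any two distinct vertices of the subnetwork
`AN_n^i` have different out-neighbors: if `x ≠ y` both have last symbol `i`, and
`x'`, `y'` are neighbors of `x`, `y` respectively lying outside `AN_n^i`, then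
`x' ≠ y'`. -/
theorem AN_out_neighbors_distinct (n : ℕ) (hn : 4 ≤ n) (i : Fin n)
    (x y x' y' : ANVertex n) (hxy : x ≠ y)
    (hx : x.1 ⟨n - 1, by omega⟩ = i) (hy : y.1 ⟨n - 1, by omega⟩ = i)
    (hxx' : (AN n).Adj x x') (hyy' : (AN n).Adj y y')
    (hx' : x'.1 ⟨n - 1, by omega⟩ ≠ i) (hy' : y'.1 ⟨n - 1, by omega⟩ ≠ i) :
    x' ≠ y' := by
  obtain ⟨a1, a2, a3, a4, a5⟩ := AN_out_edge n hn i x x' hx hxx' hx'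
  obtain ⟨b1, b2, b3, b4, b5⟩ := AN_out_edge n hn i y y' hy hyy' hy'
  intro h
  subst h
  apply hxy
  apply Subtype.ext
  apply Equiv.ext
  intro j
  rcases j with ⟨jv, hj⟩
  rcases Nat.lt_or_ge jv 3 with hj3 | hj3
  · match jv, hj3 with
    | 0, _ => exact a1.trans b1.symm
    | 1, _ => exact a2.trans b2.symm
    | 2, _ => exact a3.trans b3.symm
  · by_cases hjn : jv = n - 1
    · subst hjn
      exact a4.trans b4.symm
    · exact (a5 ⟨jv, hj⟩ hj3 hjn).trans (b5 ⟨jv, hj⟩ hj3 hjn).symm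
end

section
/- For every integer n ≥ 3, the n-dimensional alternating group network AN_n is an (n−1)-regular connected graph whose vertex connectivity equals n − 1; that is, every vertex of AN_n has exactly n − 1 neighbors, AN_n is connected, every set of at most n − 2 vertices fails to disconnect AN_n, and some set of n − 1 vertices disconnects AN_n (for n ≥ 4). -/
open SimpleGraph

section ANauxiliary
open Equiv Equiv.Perm

namespace ANwork
variable {m : ℕ}

def a0 : Fin (m+3) := ⟨0, by omega⟩
def a1 : Fin (m+3) := ⟨1, by omega⟩
def a2 : Fin (m+3) := ⟨2, by omega⟩

/-- the 3-cycle generator: σ 0 = 2, σ 1 = 0, σ 2 = 1 -/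
def sg (m : ℕ) : Perm (Fin (m+3)) := Equiv.swap a0 a2 * Equiv.swap a1 a2

/-- the transposition-pair generator, for 3 ≤ i -/
def tau (m : ℕ) (i : Fin (m+3)) : Perm (Fin (m+3)) := Equiv.swap a0 a1 * Equiv.swap a2 i

lemma a0_ne_a1 : (a0 : Fin (m+3)) ≠ a1 := by simp [a0, a1, Fin.ext_iff]
lemma a0_ne_a2 : (a0 : Fin (m+3)) ≠ a2 := by simp [a0, a2, Fin.ext_iff]
lemma a1_ne_a2 : (a1 : Fin (m+3)) ≠ a2 := by simp [a1, a2, Fin.ext_iff]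
lemma a1_ne_a0 : (a1 : Fin (m+3)) ≠ a0 := Ne.symm a0_ne_a1
lemma a2_ne_a0 : (a2 : Fin (m+3)) ≠ a0 := Ne.symm a0_ne_a2
lemma a2_ne_a1 : (a2 : Fin (m+3)) ≠ a1 := Ne.symm a1_ne_a2

lemma sg_apply0 : sg m a0 = a2 := by
  rw [sg, Equiv.Perm.mul_apply, Equiv.swap_apply_of_ne_of_ne a0_ne_a1 a0_ne_a2,
    Equiv.swap_apply_left]
lemma sg_apply1 : sg m a1 = a0 := by
  rw [sg, Equiv.Perm.mul_apply, Equiv.swap_apply_left, Equiv.swap_apply_right]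
lemma sg_apply2 : sg m a2 = a1 := by
  rw [sg, Equiv.Perm.mul_apply, Equiv.swap_apply_right,
    Equiv.swap_apply_of_ne_of_ne a1_ne_a0 a1_ne_a2]
lemma sg_apply_ge (j : Fin (m+3)) (hj : 3 ≤ (j:ℕ)) : sg m j = j := by
  have h0 : j ≠ a0 := fun h => by have := congrArg Fin.val h; change (j:ℕ) = 0 at this; omega
  have h1 : j ≠ a1 := fun h => by have := congrArg Fin.val h; change (j:ℕ) = 1 at this; omega
  have h2 : j ≠ a2 := fun h => by have := congrArg Fin.val h; change (j:ℕ) = 2 at this; omega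
  rw [sg, Equiv.Perm.mul_apply, Equiv.swap_apply_of_ne_of_ne h1 h2,
    Equiv.swap_apply_of_ne_of_ne h0 h2]

variable {i : Fin (m+3)}

lemma perm_inv_apply_self' {α : Type*} (σ : Equiv.Perm α) (x : α) : σ⁻¹ (σ x) = x :=
  Equiv.symm_apply_apply σ x
lemma perm_apply_inv_self' {α : Type*} (σ : Equiv.Perm α) (x : α) : σ (σ⁻¹ x) = x :=
  Equiv.apply_symm_apply σ x

lemma perm_inv_fix {α : Type*} {σ : Equiv.Perm α} {x : α} (h : σ x = x) : σ⁻¹ x = x := by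
  calc σ⁻¹ x = σ⁻¹ (σ x) := by rw [h]
  _ = x := perm_inv_apply_self' σ x

lemma ne_a0 (hi : 3 ≤ (i:ℕ)) : i ≠ a0 := fun h => by
  have := congrArg Fin.val h; change (i:ℕ) = 0 at this; omega
lemma ne_a1 (hi : 3 ≤ (i:ℕ)) : i ≠ a1 := fun h => by
  have := congrArg Fin.val h; change (i:ℕ) = 1 at this; omega
lemma ne_a2 (hi : 3 ≤ (i:ℕ)) : i ≠ a2 := fun h => by
  have := congrArg Fin.val h; change (i:ℕ) = 2 at this; omega

lemma tau_apply0 (hi : 3 ≤ (i:ℕ)) : tau m i a0 = a1 := by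
  rw [tau, Equiv.Perm.mul_apply, Equiv.swap_apply_of_ne_of_ne a0_ne_a2 (Ne.symm (ne_a0 hi)),
    Equiv.swap_apply_left]
lemma tau_apply1 (hi : 3 ≤ (i:ℕ)) : tau m i a1 = a0 := by
  rw [tau, Equiv.Perm.mul_apply, Equiv.swap_apply_of_ne_of_ne a1_ne_a2 (Ne.symm (ne_a1 hi)),
    Equiv.swap_apply_right]
lemma tau_apply2 (hi : 3 ≤ (i:ℕ)) : tau m i a2 = i := by
  rw [tau, Equiv.Perm.mul_apply, Equiv.swap_apply_left,
    Equiv.swap_apply_of_ne_of_ne (ne_a0 hi) (ne_a1 hi)]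
lemma tau_applyi (hi : 3 ≤ (i:ℕ)) : tau m i i = a2 := by
  rw [tau, Equiv.Perm.mul_apply, Equiv.swap_apply_right,
    Equiv.swap_apply_of_ne_of_ne a2_ne_a0 a2_ne_a1]
lemma tau_apply_ge (hi : 3 ≤ (i:ℕ)) (j : Fin (m+3)) (hj : 3 ≤ (j:ℕ)) (hji : j ≠ i) :
    tau m i j = j := by
  rw [tau, Equiv.Perm.mul_apply, Equiv.swap_apply_of_ne_of_ne (ne_a2 hj) hji,
    Equiv.swap_apply_of_ne_of_ne (ne_a0 hj) (ne_a1 hj)]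

lemma sign_sg : sign (sg m) = 1 := by
  simp [sg, sign_swap, a0_ne_a2, a1_ne_a2]
lemma sign_tau (hi : 3 ≤ (i:ℕ)) : sign (tau m i) = 1 := by
  simp [tau, sign_swap, a0_ne_a1, Ne.symm (ne_a2 hi)]

lemma fin_cases' (x : Fin (m+3)) : x = a0 ∨ x = a1 ∨ x = a2 ∨ 3 ≤ (x:ℕ) := by
  simp only [Fin.ext_iff, a0, a1, a2]; omega

/-- characterization of the adjacency relation -/
lemma anadj_iff {p q : Perm (Fin (m+3))} :
    ANAdj (m+3) p q ↔ (q = p * sg m ∨ q = p * (sg m)⁻¹ ∨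
      ∃ i : Fin (m+3), 3 ≤ (i:ℕ) ∧ q = p * tau m i) := by
  have key : ∀ (g : Perm (Fin (m+3))), q = p * g ↔ ∀ x, q x = p (g x) := by
    intro g
    constructor
    · rintro rfl x; rfl
    · intro h; apply Equiv.ext; intro x; rw [Equiv.Perm.mul_apply]; exact h x
  constructor
  · rintro ⟨hn, h⟩
    rcases h with ⟨h1, h2, h3, h4⟩ | ⟨h1, h2, h3, h4⟩ | ⟨i, hi, h1, h2, h3, h4, h5⟩
    · refine Or.inl ((key _).2 ?_)
      intro x
      rcases fin_cases' x with rfl | rfl | rfl | hx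
      · rw [sg_apply0]; exact h3.symm
      · rw [sg_apply1]; exact h1.symm
      · rw [sg_apply2]; exact h2.symm
      · rw [sg_apply_ge x hx]; exact (h4 x hx).symm
    · refine Or.inr (Or.inl ((key _).2 ?_))
      intro x
      have e0 : (sg m)⁻¹ a0 = a1 := by
        calc (sg m)⁻¹ a0 = (sg m)⁻¹ (sg m a1) := by rw [sg_apply1]
        _ = a1 := perm_inv_apply_self' _ _
      have e1 : (sg m)⁻¹ a1 = a2 := by
        calc (sg m)⁻¹ a1 = (sg m)⁻¹ (sg m a2) := by rw [sg_apply2]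
        _ = a2 := perm_inv_apply_self' _ _
      have e2 : (sg m)⁻¹ a2 = a0 := by
        calc (sg m)⁻¹ a2 = (sg m)⁻¹ (sg m a0) := by rw [sg_apply0]
        _ = a0 := perm_inv_apply_self' _ _
      rcases fin_cases' x with rfl | rfl | rfl | hx
      · rw [e0]; exact h2.symm
      · rw [e1]; exact h3.symm
      · rw [e2]; exact h1.symm
      · rw [perm_inv_fix (sg_apply_ge x hx)]
        exact (h4 x hx).symm
    · refine Or.inr (Or.inr ⟨i, hi, (key _).2 ?_⟩)
      intro x
      rcases fin_cases' x with rfl | rfl | rfl | hx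
      · rw [tau_apply0 hi]; exact h2.symm
      · rw [tau_apply1 hi]; exact h1.symm
      · rw [tau_apply2 hi]; exact h4.symm
      · by_cases hxi : x = i
        · subst hxi; rw [tau_applyi hi]; exact h3.symm
        · rw [tau_apply_ge hi x hx hxi]; exact (h5 x hx hxi).symm -- ok
  · intro h
    refine ⟨by omega, ?_⟩
    rcases h with h | h | ⟨i, hi, h⟩
    · refine Or.inl (show p a0 = q a1 ∧ p a1 = q a2 ∧ p a2 = q a0 ∧
        (∀ j : Fin (m+3), 3 ≤ (j : ℕ) → p j = q j) from ?_)
      have hx := (key _).1 h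
      exact ⟨(hx a1).trans (by rw [sg_apply1]) |>.symm, (hx a2).trans (by rw [sg_apply2]) |>.symm,
        (hx a0).trans (by rw [sg_apply0]) |>.symm,
        fun j hj => ((hx j).trans (by rw [sg_apply_ge j hj])).symm⟩
    · refine Or.inr (Or.inl (show p a0 = q a2 ∧ p a1 = q a0 ∧ p a2 = q a1 ∧
        (∀ j : Fin (m+3), 3 ≤ (j : ℕ) → p j = q j) from ?_))
      have hx := (key _).1 h
      have e0 : (sg m)⁻¹ a0 = a1 := by
        calc (sg m)⁻¹ a0 = (sg m)⁻¹ (sg m a1) := by rw [sg_apply1]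
        _ = a1 := perm_inv_apply_self' _ _
      have e1 : (sg m)⁻¹ a1 = a2 := by
        calc (sg m)⁻¹ a1 = (sg m)⁻¹ (sg m a2) := by rw [sg_apply2]
        _ = a2 := perm_inv_apply_self' _ _
      have e2 : (sg m)⁻¹ a2 = a0 := by
        calc (sg m)⁻¹ a2 = (sg m)⁻¹ (sg m a0) := by rw [sg_apply0]
        _ = a0 := perm_inv_apply_self' _ _
      refine ⟨((hx a2).trans (by rw [e2])).symm, ((hx a0).trans (by rw [e0])).symm,
        ((hx a1).trans (by rw [e1])).symm, fun j hj => ?_⟩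
      exact ((hx j).trans (by rw [perm_inv_fix (sg_apply_ge j hj)])).symm
    · refine Or.inr (Or.inr ⟨i, hi, show p a0 = q a1 ∧ p a1 = q a0 ∧ p a2 = q i ∧ p i = q a2 ∧
        (∀ j : Fin (m+3), 3 ≤ (j : ℕ) → j ≠ i → p j = q j) from ?_⟩)
      have hx := (key _).1 h
      exact ⟨((hx a1).trans (by rw [tau_apply1 hi])).symm, ((hx a0).trans (by rw [tau_apply0 hi])).symm,
        ((hx i).trans (by rw [tau_applyi hi])).symm, ((hx a2).trans (by rw [tau_apply2 hi])).symm,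
        fun j hj hji => ((hx j).trans (by rw [tau_apply_ge hi j hj hji])).symm⟩


/-! ### The Cayley-style description -/

def gens (m : ℕ) : Set (Perm (Fin (m+3))) :=
  {sg m, (sg m)⁻¹} ∪ tau m '' {i | 3 ≤ (i:ℕ)}

lemma sign_of_gens {g : Perm (Fin (m+3))} (hg : g ∈ gens m) : sign g = 1 := by
  rcases hg with (rfl | rfl) | ⟨i, hi, rfl⟩
  · exact sign_sg
  · rw [map_inv, sign_sg]; rfl
  · exact sign_tau hi

lemma sg_mem_gens : sg m ∈ gens m := Or.inl (Or.inl rfl)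
lemma sg_inv_mem_gens : (sg m)⁻¹ ∈ gens m := Or.inl (Or.inr rfl)
lemma tau_mem_gens {i : Fin (m+3)} (hi : 3 ≤ (i:ℕ)) : tau m i ∈ gens m :=
  Or.inr ⟨i, hi, rfl⟩

lemma adj_iff {x y : ANVertex (m+3)} :
    (AN (m+3)).Adj x y ↔ ∃ g ∈ gens m, y.1 = x.1 * g := by
  show ANAdj (m+3) x.1 y.1 ↔ _
  rw [anadj_iff]
  constructor
  · rintro (h | h | ⟨i, hi, h⟩)
    · exact ⟨_, sg_mem_gens, h⟩
    · exact ⟨_, sg_inv_mem_gens, h⟩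
    · exact ⟨_, tau_mem_gens hi, h⟩
  · rintro ⟨g, (rfl | rfl) | ⟨i, hi, rfl⟩, h⟩
    · exact Or.inl h
    · exact Or.inr (Or.inl h)
    · exact Or.inr (Or.inr ⟨i, hi, h⟩)

/-- the vertex `x * g` for `g ∈ gens` -/
def vmul (x : ANVertex (m+3)) {g : Perm (Fin (m+3))} (hg : g ∈ gens m) : ANVertex (m+3) :=
  ⟨x.1 * g, by rw [map_mul, x.2, sign_of_gens hg, one_mul]⟩

lemma adj_vmul (x : ANVertex (m+3)) {g : Perm (Fin (m+3))} (hg : g ∈ gens m) :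
    (AN (m+3)).Adj x (vmul x hg) := adj_iff.2 ⟨g, hg, rfl⟩

/-! ### Extension of permutations from `Fin (m+3)` to `Fin (m+4)` -/

def cst (j : Fin (m+3)) : Fin (m+4) := ⟨j.1, by omega⟩

def castE (m : ℕ) : Fin (m+3) ≃ {x : Fin (m+4) // (x:ℕ) < m+3} where
  toFun j := ⟨cst j, j.2⟩
  invFun x := ⟨x.1.1, x.2⟩
  left_inv j := rfl
  right_inv x := rfl

def ext (p : Perm (Fin (m+3))) : Perm (Fin (m+4)) := p.extendDomain (castE m)

lemma ext_apply_cst (p : Perm (Fin (m+3))) (j : Fin (m+3)) : ext p (cst j) = cst (p j) :=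
  Equiv.Perm.extendDomain_apply_image p (castE m) j

lemma lastF_val : ((Fin.last (m+3) : Fin (m+4)) : ℕ) = m + 3 := rfl

lemma ext_apply_last (p : Perm (Fin (m+3))) : ext p (Fin.last (m+3)) = Fin.last (m+3) :=
  Equiv.Perm.extendDomain_apply_not_subtype p (castE m) (by simp [lastF_val])

lemma sign_ext (p : Perm (Fin (m+3))) : sign (ext p) = sign p :=
  Equiv.Perm.sign_extendDomain p (castE m)

lemma ext_mul (p q : Perm (Fin (m+3))) : ext (p * q) = ext p * ext q :=
  (Equiv.Perm.extendDomain_mul _ _ _).symm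

lemma cst_val (j : Fin (m+3)) : ((cst j : Fin (m+4)) : ℕ) = j.1 := rfl

lemma ext_inv (p : Perm (Fin (m+3))) : ext (p⁻¹) = (ext p)⁻¹ :=
  (Equiv.Perm.extendDomain_inv p (castE m)).symm

lemma fin_cases4 (x : Fin (m+4)) :
    x = a0 ∨ x = a1 ∨ x = a2 ∨ 3 ≤ (x:ℕ) := fin_cases' x

lemma cst_a0 : cst (a0 : Fin (m+3)) = (a0 : Fin (m+4)) := rfl
lemma cst_a1 : cst (a1 : Fin (m+3)) = (a1 : Fin (m+4)) := rfl
lemma cst_a2 : cst (a2 : Fin (m+3)) = (a2 : Fin (m+4)) := rfl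

lemma ext_sg : ext (sg m) = sg (m+1) := by
  apply Equiv.ext
  intro x
  by_cases hx : (x : ℕ) < m + 3
  · have : x = cst (⟨x.1, hx⟩ : Fin (m+3)) := rfl
    rw [this, ext_apply_cst]
    rcases fin_cases' (⟨x.1, hx⟩ : Fin (m+3)) with h | h | h | h
    · rw [h, sg_apply0, cst_a2]
      have : cst (a0 : Fin (m+3)) = (a0 : Fin (m+4)) := rfl
      rw [this, sg_apply0]
    · rw [h, sg_apply1, cst_a0, cst_a1, sg_apply1]
    · rw [h, sg_apply2, cst_a1, cst_a2, sg_apply2]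
    · rw [sg_apply_ge _ h, sg_apply_ge (cst ⟨x.1, hx⟩) h]
  · have hxl : x = Fin.last (m+3) := by
      apply Fin.ext; have := x.2; simp only [lastF_val]; omega
    rw [hxl, ext_apply_last, sg_apply_ge _ (by simp [lastF_val])]

lemma ext_tau {i : Fin (m+3)} (hi : 3 ≤ (i:ℕ)) : ext (tau m i) = tau (m+1) (cst i) := by
  have hci : 3 ≤ ((cst i : Fin (m+4)) : ℕ) := hi
  apply Equiv.ext
  intro x
  by_cases hx : (x : ℕ) < m + 3
  · have hrep : x = cst (⟨x.1, hx⟩ : Fin (m+3)) := rfl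
    rw [hrep, ext_apply_cst]
    rcases fin_cases' (⟨x.1, hx⟩ : Fin (m+3)) with h | h | h | h
    · rw [h, tau_apply0 hi, cst_a0, cst_a1, tau_apply0 hci]
    · rw [h, tau_apply1 hi, cst_a0, cst_a1, tau_apply1 hci]
    · rw [h, tau_apply2 hi, cst_a2, tau_apply2 hci]
    · by_cases hxi : (⟨x.1, hx⟩ : Fin (m+3)) = i
      · rw [hxi, tau_applyi hi, cst_a2, tau_applyi hci]
      · rw [tau_apply_ge hi _ h hxi, tau_apply_ge hci (cst ⟨x.1, hx⟩) h
          (by simpa [cst, Fin.ext_iff] using (Fin.ext_iff.not.1 hxi))]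
  · have hxl : x = Fin.last (m+3) := by
      apply Fin.ext; have := x.2; simp only [lastF_val]; omega
    rw [hxl, ext_apply_last, tau_apply_ge hci _ (by simp [lastF_val])
      (by intro h; have hv := congrArg Fin.val h; rw [lastF_val, cst_val] at hv
          have := i.2; omega)]

lemma ext_gens {g : Perm (Fin (m+3))} (hg : g ∈ gens m) : ext g ∈ gens (m+1) := by
  rcases hg with (rfl | rfl) | ⟨i, hi, rfl⟩
  · rw [ext_sg]; exact sg_mem_gens
  · rw [ext_inv, ext_sg]; exact sg_inv_mem_gens
  · rw [ext_tau hi]; exact tau_mem_gens (show 3 ≤ ((cst i : Fin (m+4)):ℕ) from hi)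

/-- restriction: a permutation fixing the last element comes from an extension -/
lemma exists_ext_of_fix_last (q : Perm (Fin (m+4))) (hq : q (Fin.last (m+3)) = Fin.last (m+3)) :
    ∃ p : Perm (Fin (m+3)), ext p = q := by
  have hne : ∀ j : Fin (m+3), q (cst j) ≠ Fin.last (m+3) := by
    intro j h
    have : cst j = Fin.last (m+3) := q.injective (h.trans hq.symm)
    have := congrArg Fin.val this
    simp only [cst, lastF_val] at this
    omega
  have hne' : ∀ j : Fin (m+3), q⁻¹ (cst j) ≠ Fin.last (m+3) := by
    intro j h
    have : cst j = q (Fin.last (m+3)) := by rw [← h, perm_apply_inv_self']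
    rw [hq] at this
    have := congrArg Fin.val this
    simp only [cst, lastF_val] at this
    omega
  have hlt : ∀ j : Fin (m+3), ((q (cst j)) : ℕ) < m + 3 := by
    intro j
    have h2 := (q (cst j)).2
    have hv : ((q (cst j)) : ℕ) ≠ m + 3 := fun h => hne j (Fin.ext (h.trans lastF_val.symm))
    omega
  have hlt' : ∀ j : Fin (m+3), ((q⁻¹ (cst j)) : ℕ) < m + 3 := by
    intro j
    have h2 := (q⁻¹ (cst j)).2
    have hv : ((q⁻¹ (cst j)) : ℕ) ≠ m + 3 := fun h => hne' j (Fin.ext (h.trans lastF_val.symm))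
    omega
  refine ⟨⟨fun j => ⟨(q (cst j)).1, hlt j⟩, fun j => ⟨(q⁻¹ (cst j)).1, hlt' j⟩, ?_, ?_⟩, ?_⟩
  · intro j
    apply Fin.ext
    simp only
    have : cst (⟨(q (cst j)).1, hlt j⟩ : Fin (m+3)) = q (cst j) := rfl
    rw [this, perm_inv_apply_self']
    rfl
  · intro j
    apply Fin.ext
    simp only
    have : cst (⟨(q⁻¹ (cst j)).1, hlt' j⟩ : Fin (m+3)) = q⁻¹ (cst j) := rfl
    rw [this, perm_apply_inv_self']
    rfl
  · apply Equiv.ext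
    intro x
    by_cases hx : (x : ℕ) < m + 3
    · have hrep : x = cst (⟨x.1, hx⟩ : Fin (m+3)) := rfl
      rw [hrep, ext_apply_cst]
      apply Fin.ext
      rfl
    · have hxl : x = Fin.last (m+3) := by
        apply Fin.ext; have := x.2; simp only [lastF_val]; omega
      rw [hxl, ext_apply_last, hq]


/-! ### Classes by the value at the last position -/

instance : Inhabited (ANVertex (m+3)) := ⟨⟨1, map_one _⟩⟩

def lastF (m : ℕ) : Fin (m+4) := Fin.last (m+3)

lemma lastF_ge : 3 ≤ ((lastF m : Fin (m+4)) : ℕ) := by show (3:ℕ) ≤ m+3; omega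

lemma lastF_ne_a0 : (lastF m) ≠ (a0 : Fin (m+4)) := ne_a0 lastF_ge
lemma lastF_ne_a1 : (lastF m) ≠ (a1 : Fin (m+4)) := ne_a1 lastF_ge
lemma lastF_ne_a2 : (lastF m) ≠ (a2 : Fin (m+4)) := ne_a2 lastF_ge

def cls (x : ANVertex (m+4)) : Fin (m+4) := x.1 (lastF m)

lemma even_adjust (p0 : Perm (Fin (m+4))) :
    ∃ p : Perm (Fin (m+4)), sign p = 1 ∧ p (lastF m) = p0 (lastF m) ∧ p a2 = p0 a2 := by
  by_cases hs : sign p0 = 1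
  · exact ⟨p0, hs, rfl, rfl⟩
  · refine ⟨p0 * Equiv.swap a0 a1, ?_, ?_, ?_⟩
    · rw [map_mul, sign_swap a0_ne_a1]
      rcases Int.units_eq_one_or (sign p0) with h | h
      · exact absurd h hs
      · rw [h]; rfl
    · rw [Equiv.Perm.mul_apply, Equiv.swap_apply_of_ne_of_ne lastF_ne_a0 lastF_ne_a1]
    · rw [Equiv.Perm.mul_apply, Equiv.swap_apply_of_ne_of_ne a2_ne_a0 a2_ne_a1]

/-- make an even vertex with prescribed values at `lastF` and `a2` -/
lemma exists_vertex (s t : Fin (m+4)) (hst : t ≠ s) :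
    ∃ x : ANVertex (m+4), cls x = s ∧ x.1 a2 = t := by
  classical
  obtain ⟨w, hw⟩ : ∃ w, Equiv.swap (lastF m) s w = t := ⟨_, Equiv.swap_apply_self _ _ t⟩
  have hwne : w ≠ lastF m := fun h => hst (by rw [← hw, h, Equiv.swap_apply_left])
  have h1 : (Equiv.swap (lastF m) s * Equiv.swap a2 w) (lastF m) = s := by
    rw [Equiv.Perm.mul_apply, Equiv.swap_apply_of_ne_of_ne lastF_ne_a2 (Ne.symm hwne),
      Equiv.swap_apply_left]
  have h2 : (Equiv.swap (lastF m) s * Equiv.swap a2 w) a2 = t := by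
    rw [Equiv.Perm.mul_apply, Equiv.swap_apply_left, hw]
  obtain ⟨p, hsign, hpl, hp2⟩ := even_adjust (Equiv.swap (lastF m) s * Equiv.swap a2 w)
  exact ⟨⟨p, hsign⟩, hpl.trans h1, hp2.trans h2⟩

/-- an even permutation with prescribed value at `lastF` -/
lemma exists_fS (s : Fin (m+4)) :
    ∃ f : Perm (Fin (m+4)), sign f = 1 ∧ f (lastF m) = s := by
  obtain ⟨p, hsign, hpl, _⟩ := even_adjust (Equiv.swap (lastF m) s)
  exact ⟨p, hsign, hpl.trans (Equiv.swap_apply_left _ _)⟩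

noncomputable def fS (m : ℕ) (s : Fin (m+4)) : Perm (Fin (m+4)) := (exists_fS s).choose

lemma sign_fS (s : Fin (m+4)) : sign (fS m s) = 1 := (exists_fS s).choose_spec.1
lemma fS_last (s : Fin (m+4)) : fS m s (lastF m) = s := (exists_fS s).choose_spec.2

/-- the embedding of `AN (m+3)` onto the class `s` of `AN (m+4)` -/
noncomputable def Phi (s : Fin (m+4)) (x : ANVertex (m+3)) : ANVertex (m+4) :=
  ⟨fS m s * ext x.1, by rw [map_mul, sign_fS, sign_ext, x.2, one_mul]⟩

lemma cls_Phi (s : Fin (m+4)) (x : ANVertex (m+3)) : cls (Phi s x) = s := by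
  show (fS m s * ext x.1) (lastF m) = s
  rw [Equiv.Perm.mul_apply, show ext x.1 (lastF m) = lastF m from ext_apply_last x.1, fS_last]

lemma Phi_injective (s : Fin (m+4)) : Function.Injective (Phi s) := by
  intro x y h
  have h1 : fS m s * ext x.1 = fS m s * ext y.1 := congrArg Subtype.val h
  have h2 : ext x.1 = ext y.1 := by
    have := congrArg (fun z => (fS m s)⁻¹ * z) h1
    simpa [← mul_assoc] using this
  apply Subtype.ext
  apply Equiv.ext
  intro j
  have := congrArg (fun q : Perm (Fin (m+4)) => q (cst j)) h2
  simp only [ext_apply_cst] at this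
  have h3 : ((cst (x.1 j) : Fin (m+4)) : ℕ) = ((cst (y.1 j) : Fin (m+4)) : ℕ) :=
    congrArg Fin.val this
  rw [cst_val, cst_val] at h3
  exact Fin.ext h3

lemma adj_Phi (s : Fin (m+4)) {x y : ANVertex (m+3)} (h : (AN (m+3)).Adj x y) :
    (AN (m+4)).Adj (Phi s x) (Phi s y) := by
  rcases adj_iff.1 h with ⟨g, hg, hxy⟩
  refine adj_iff.2 ⟨ext g, ext_gens hg, ?_⟩
  show fS m s * ext y.1 = fS m s * ext x.1 * ext g
  rw [hxy, ext_mul, mul_assoc]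

lemma Phi_surjective (s : Fin (m+4)) (y : ANVertex (m+4)) (hy : cls y = s) :
    ∃ x : ANVertex (m+3), Phi s x = y := by
  set q : Perm (Fin (m+4)) := (fS m s)⁻¹ * y.1 with hq
  have hql : q (Fin.last (m+3)) = Fin.last (m+3) := by
    rw [hq, Equiv.Perm.mul_apply]
    have h1 : y.1 (Fin.last (m+3)) = fS m s (lastF m) := hy.trans (fS_last s).symm
    rw [h1]
    exact perm_inv_apply_self' _ _
  obtain ⟨p, hp⟩ := exists_ext_of_fix_last q hql
  have hsp : sign p = 1 := by
    have : sign (ext p) = sign q := by rw [hp]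
    rw [sign_ext] at this
    rw [this, hq, map_mul, map_inv, sign_fS, y.2]; rfl
  refine ⟨⟨p, hsp⟩, ?_⟩
  apply Subtype.ext
  show fS m s * ext p = y.1
  rw [hp, hq, ← mul_assoc, mul_inv_cancel, one_mul]

/-! ### Cross edges -/

lemma tL_mem : tau (m+1) (lastF m) ∈ gens (m+1) := tau_mem_gens lastF_ge

def cross (x : ANVertex (m+4)) : ANVertex (m+4) := vmul x tL_mem

lemma adj_cross (x : ANVertex (m+4)) : (AN (m+4)).Adj x (cross x) := adj_vmul x tL_mem

lemma cls_cross (x : ANVertex (m+4)) : cls (cross x) = x.1 a2 := by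
  show (x.1 * tau (m+1) (lastF m)) (lastF m) = x.1 a2
  rw [Equiv.Perm.mul_apply, tau_applyi lastF_ge]

lemma a2_cross (x : ANVertex (m+4)) : (cross x).1 a2 = cls x := by
  show (x.1 * tau (m+1) (lastF m)) a2 = x.1 (lastF m)
  rw [Equiv.Perm.mul_apply, tau_apply2 lastF_ge]

lemma cls_cross_ne (x : ANVertex (m+4)) : cls (cross x) ≠ cls x := by
  rw [cls_cross]
  intro h
  exact lastF_ne_a2 (x.1.injective h.symm)

/-! ### Reachability within a class -/

section Reach

variable (F : Finset (ANVertex (m+4)))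

abbrev IndG (F : Finset (ANVertex (m+4))) : SimpleGraph ((↑F : Set (ANVertex (m+4)))ᶜ : Set _) :=
  (AN (m+4)).induce (↑F : Set (ANVertex (m+4)))ᶜ

lemma sameclass
    (IH : ∀ F' : Finset (ANVertex (m+3)), F'.card ≤ m+1 →
      ((AN (m+3)).induce (↑F' : Set (ANVertex (m+3)))ᶜ).Connected)
    (s : Fin (m+4)) (hcount : (F.filter (fun x => cls x = s)).card ≤ m+1)
    (u v : ANVertex (m+4)) (hu : u ∈ (↑F : Set (ANVertex (m+4)))ᶜ)
    (hv : v ∈ (↑F : Set (ANVertex (m+4)))ᶜ) (hcu : cls u = s) (hcv : cls v = s) :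
    (IndG F).Reachable ⟨u, hu⟩ ⟨v, hv⟩ := by
  classical
  set F' : Finset (ANVertex (m+3)) := Finset.univ.filter (fun x => Phi s x ∈ F) with hF'
  have hF'card : F'.card ≤ m + 1 := by
    refine le_trans ?_ hcount
    apply Finset.card_le_card_of_injOn (Phi s)
    · intro x hx
      rw [Finset.mem_coe, Finset.mem_filter]
      rw [hF', Finset.mem_coe, Finset.mem_filter] at hx
      exact ⟨hx.2, cls_Phi s x⟩
    · intro x _ y _ h
      exact Phi_injective s h
  have hconn := IH F' hF'card
  -- the graph homomorphism
  have hmem : ∀ z : ((↑F' : Set (ANVertex (m+3)))ᶜ : Set _),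
      Phi s z.1 ∈ (↑F : Set (ANVertex (m+4)))ᶜ := by
    rintro ⟨z, hz⟩
    intro hmem
    apply hz
    rw [hF']
    simp only [Finset.coe_filter, Set.mem_setOf_eq, Finset.mem_univ, true_and]
    exact hmem
  let hom : ((AN (m+3)).induce (↑F' : Set (ANVertex (m+3)))ᶜ) →g IndG F :=
    ⟨fun z => ⟨Phi s z.1, hmem z⟩, fun hadj => adj_Phi s hadj⟩
  obtain ⟨xu, hxu⟩ := Phi_surjective s u hcu
  obtain ⟨xv, hxv⟩ := Phi_surjective s v hcv
  have hxu' : xu ∈ (↑F' : Set (ANVertex (m+3)))ᶜ := by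
    intro hmem
    rw [hF'] at hmem
    simp only [Finset.coe_filter, Set.mem_setOf_eq, Finset.mem_univ, true_and] at hmem
    rw [hxu] at hmem
    exact hu hmem
  have hxv' : xv ∈ (↑F' : Set (ANVertex (m+3)))ᶜ := by
    intro hmem
    rw [hF'] at hmem
    simp only [Finset.coe_filter, Set.mem_setOf_eq, Finset.mem_univ, true_and] at hmem
    rw [hxv] at hmem
    exact hv hmem
  have hr := hconn.preconnected ⟨xu, hxu'⟩ ⟨xv, hxv'⟩
  have := hr.map hom
  have e1 : hom ⟨xu, hxu'⟩ = ⟨u, hu⟩ := Subtype.ext hxu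
  have e2 : hom ⟨xv, hxv'⟩ = ⟨v, hv⟩ := Subtype.ext hxv
  rwa [e1, e2] at this

def linked (s t : Fin (m+4)) : Prop :=
  ∃ x : ANVertex (m+4), x ∉ F ∧ cross x ∉ F ∧ cls x = s ∧ cls (cross x) = t

lemma crossreach
    (IH : ∀ F' : Finset (ANVertex (m+3)), F'.card ≤ m+1 →
      ((AN (m+3)).induce (↑F' : Set (ANVertex (m+3)))ᶜ).Connected)
    (s t : Fin (m+4)) (hcs : (F.filter (fun x => cls x = s)).card ≤ m+1)
    (hct : (F.filter (fun x => cls x = t)).card ≤ m+1)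
    (hlink : linked F s t)
    (u v : ANVertex (m+4)) (hu : u ∈ (↑F : Set (ANVertex (m+4)))ᶜ)
    (hv : v ∈ (↑F : Set (ANVertex (m+4)))ᶜ) (hcu : cls u = s) (hcv : cls v = t) :
    (IndG F).Reachable ⟨u, hu⟩ ⟨v, hv⟩ := by
  obtain ⟨x, hxF, hcxF, hcx, hccx⟩ := hlink
  have hx' : x ∈ (↑F : Set (ANVertex (m+4)))ᶜ := by simpa using hxF
  have hcx' : cross x ∈ (↑F : Set (ANVertex (m+4)))ᶜ := by simpa using hcxF
  have r1 : (IndG F).Reachable ⟨u, hu⟩ ⟨x, hx'⟩ :=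
    sameclass F IH s hcs u x hu hx' hcu hcx
  have r2 : (IndG F).Reachable ⟨x, hx'⟩ ⟨cross x, hcx'⟩ := by
    apply SimpleGraph.Adj.reachable
    exact adj_cross x
  have r3 : (IndG F).Reachable ⟨cross x, hcx'⟩ ⟨v, hv⟩ :=
    sameclass F IH t hct _ v hcx' hv hccx hcv
  exact (r1.trans r2).trans r3

lemma dead_witness (s t : Fin (m+4)) (hst : t ≠ s) (hdead : ¬ linked F s t) :
    ∃ q ∈ F, (cls q = s ∧ q.1 a2 = t) ∨ (cls q = t ∧ q.1 a2 = s) := by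
  obtain ⟨x, hcx, hx2⟩ := exists_vertex s t hst
  by_cases hxF : x ∈ F
  · exact ⟨x, hxF, Or.inl ⟨hcx, hx2⟩⟩
  by_cases hcxF : cross x ∈ F
  · refine ⟨cross x, hcxF, Or.inr ⟨?_, ?_⟩⟩
    · rw [cls_cross, hx2]
    · rw [a2_cross, hcx]
  · exact absurd ⟨x, hxF, hcxF, hcx, by rw [cls_cross, hx2]⟩ hdead

lemma claimC (hFcard : F.card ≤ m + 2) (s t : Fin (m+4)) (hst : s ≠ t)
    (hdead : ¬ linked F s t) :
    ∃ r : Fin (m+4), r ≠ s ∧ r ≠ t ∧ linked F s r ∧ linked F r t := by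
  classical
  by_contra hcon
  push_neg at hcon
  -- for every r outside {s,t} one of the two links is dead, giving a witness in F
  have wit : ∀ r : Fin (m+4), ∃ q : ANVertex (m+4), (r ≠ s ∧ r ≠ t) →
      q ∈ F ∧ ((cls q = r ∧ (q.1 a2 = s ∨ q.1 a2 = t)) ∨
               (q.1 a2 = r ∧ (cls q = s ∨ cls q = t))) := by
    intro r
    by_cases hr : r ≠ s ∧ r ≠ t
    · rcases hr with ⟨hrs, hrt⟩
      by_cases hl : linked F s r
      · have hl2 : ¬ linked F r t := by
          intro h
          exact (hcon r hrs hrt hl) h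
        obtain ⟨q, hqF, hq⟩ := dead_witness F r t (Ne.symm hrt) hl2
        refine ⟨q, fun _ => ⟨hqF, ?_⟩⟩
        rcases hq with ⟨h1, h2⟩ | ⟨h1, h2⟩
        · exact Or.inl ⟨h1, Or.inr h2⟩
        · exact Or.inr ⟨h2, Or.inr h1⟩
      · obtain ⟨q, hqF, hq⟩ := dead_witness F s r hrs hl
        refine ⟨q, fun _ => ⟨hqF, ?_⟩⟩
        rcases hq with ⟨h1, h2⟩ | ⟨h1, h2⟩
        · exact Or.inr ⟨h2, Or.inl h1⟩
        · exact Or.inl ⟨h1, Or.inl h2⟩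
    · exact ⟨default, fun h => absurd h hr⟩
  choose w hw using wit
  obtain ⟨q0, hq0F, hq0⟩ := dead_witness F s t (Ne.symm hst) hdead
  set Bad : Finset (Fin (m+4)) := Finset.univ.filter (fun r => r ≠ s ∧ r ≠ t) with hBad
  have hBadcard : Bad.card = m + 2 := by
    have : Bad = ({s, t} : Finset (Fin (m+4)))ᶜ := by
      ext r
      simp [hBad, not_or]
    rw [this, Finset.card_compl, Finset.card_insert_of_notMem (by simpa using hst),
      Finset.card_singleton]
    simp
  have hinj : Set.InjOn w Bad := by
    intro r hr r' hr' heq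
    rw [hBad, Finset.coe_filter] at hr hr'
    simp only [Set.mem_setOf_eq, Finset.mem_univ, true_and] at hr hr'
    have h1 := (hw r hr).2
    have h2 := (hw r' hr').2
    rw [heq] at h1
    rcases h1 with ⟨e1, _⟩ | ⟨e1, _⟩ <;> rcases h2 with ⟨e2, f2⟩ | ⟨e2, f2⟩
    · exact (e1.symm.trans e2)
    · rcases f2 with f2 | f2
      · exact absurd (e1.symm.trans f2) hr.1
      · exact absurd (e1.symm.trans f2) hr.2
    · rcases f2 with f2 | f2
      · exact absurd (e1.symm.trans f2) hr.1
      · exact absurd (e1.symm.trans f2) hr.2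
    · exact (e1.symm.trans e2)
  have himage : Bad.image w ⊆ F := by
    intro q hq
    rw [Finset.mem_image] at hq
    obtain ⟨r, hr, rfl⟩ := hq
    rw [hBad, Finset.mem_filter] at hr
    exact (hw r hr.2).1
  have hq0ni : q0 ∉ Bad.image w := by
    intro hq
    rw [Finset.mem_image] at hq
    obtain ⟨r, hr, heq⟩ := hq
    rw [hBad, Finset.mem_filter] at hr
    have h1 := (hw r hr.2).2
    rw [heq] at h1
    rcases hq0 with ⟨e1, e2⟩ | ⟨e1, e2⟩ <;>
      rcases h1 with ⟨f1, _⟩ | ⟨f1, _⟩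
    · exact hr.2.1 (f1.symm.trans e1)
    · exact hr.2.2 (f1.symm.trans e2)
    · exact hr.2.2 (f1.symm.trans e1)
    · exact hr.2.1 (f1.symm.trans e2)
  have hsub : insert q0 (Bad.image w) ⊆ F := by
    intro q hq
    rw [Finset.mem_insert] at hq
    rcases hq with rfl | hq
    · exact hq0F
    · exact himage hq
  have hcard : (insert q0 (Bad.image w)).card = m + 3 := by
    rw [Finset.card_insert_of_notMem hq0ni, Finset.card_image_of_injOn hinj, hBadcard]
  have := Finset.card_le_card hsub
  omega

end Reach


/-! ### Cardinalities -/

lemma card_ANVertex (m : ℕ) : 2 * Fintype.card (ANVertex (m+3)) = Nat.factorial (m+3) := by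
  classical
  have e : ANVertex (m+3) ≃ alternatingGroup (Fin (m+3)) :=
    Equiv.subtypeEquivRight (fun p => (Equiv.Perm.mem_alternatingGroup).symm)
  rw [Fintype.card_congr e, two_mul_card_alternatingGroup, Fintype.card_perm, Fintype.card_fin]

lemma exists_not_mem_of_card_lt {α : Type*} [Fintype α] (F : Finset α)
    (h : F.card < Fintype.card α) : ∃ x, x ∉ F := by
  by_contra hc
  push_neg at hc
  have hs : Finset.univ ⊆ F := fun x _ => hc x
  have := Finset.card_le_card hs
  rw [Finset.card_univ] at this
  omega

lemma factorial_big (m : ℕ) : 2 * (m+2) < Nat.factorial (m+4) := by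
  have h2 : m+3 ≤ Nat.factorial (m+3) := Nat.self_le_factorial _
  have h1 : (m+4) * Nat.factorial (m+3) = Nat.factorial (m+4) := rfl
  nlinarith

lemma card_big (m : ℕ) (k : ℕ) (hk : k ≤ m+2) : k < Fintype.card (ANVertex (m+4)) := by
  have hc' : 2 * Fintype.card (ANVertex (m+4)) = Nat.factorial (m+4) := card_ANVertex (m+1)
  have := factorial_big m
  omega

/-! ### Base case: `AN 3` is a triangle -/

lemma key3 : ∀ u v : Perm (Fin 3), sign u = 1 → sign v = 1 → u ≠ v →
    (v = u * sg 0 ∨ v = u * (sg 0)⁻¹) := by decide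

lemma card3 : Fintype.card (ANVertex 3) = 3 := by decide

lemma part3_base (F : Finset (ANVertex 3)) (hF : F.card ≤ 1) :
    ((AN 3).induce (↑F : Set (ANVertex 3))ᶜ).Connected := by
  classical
  obtain ⟨x0, hx0⟩ := exists_not_mem_of_card_lt F (by rw [card3]; omega)
  have hne' : Nonempty ((↑F : Set (ANVertex 3))ᶜ : Set _) := ⟨⟨x0, by simpa using hx0⟩⟩
  refine SimpleGraph.Connected.mk ?_
  rintro ⟨u, hu⟩ ⟨v, hv⟩
  by_cases h : u = v
  · subst h
    rfl
  · apply SimpleGraph.Adj.reachable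
    show (AN 3).Adj u v
    apply adj_iff.2
    rcases key3 u.1 v.1 u.2 v.2 (fun h' => h (Subtype.ext h')) with h' | h'
    · exact ⟨sg 0, sg_mem_gens, h'⟩
    · exact ⟨(sg 0)⁻¹, sg_inv_mem_gens, h'⟩

/-! ### Inductive step -/

lemma part3_step (m : ℕ)
    (IH : ∀ F' : Finset (ANVertex (m+3)), F'.card ≤ m+1 →
      ((AN (m+3)).induce (↑F' : Set (ANVertex (m+3)))ᶜ).Connected)
    (F : Finset (ANVertex (m+4))) (hF : F.card ≤ m+2) :
    ((AN (m+4)).induce (↑F : Set (ANVertex (m+4)))ᶜ).Connected := by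
  classical
  have hne : ∃ x : ANVertex (m+4), x ∉ F := by
    apply exists_not_mem_of_card_lt
    exact card_big m F.card hF
  obtain ⟨x0, hx0⟩ := hne
  have hne' : Nonempty ((↑F : Set (ANVertex (m+4)))ᶜ : Set _) := ⟨⟨x0, by simpa using hx0⟩⟩
  refine SimpleGraph.Connected.mk ?_
  rintro ⟨u, hu⟩ ⟨v, hv⟩
  by_cases hA : ∀ s : Fin (m+4), (F.filter (fun x => cls x = s)).card ≤ m+1
  · -- case A : every class loses at most m+1 vertices
    by_cases hc : cls u = cls v
    · exact sameclass F IH (cls v) (hA _) u v hu hv hc rfl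
    · by_cases hl : linked F (cls u) (cls v)
      · exact crossreach F IH _ _ (hA _) (hA _) hl u v hu hv rfl rfl
      · obtain ⟨r, _, _, l1, l2⟩ := claimC F hF _ _ hc hl
        obtain ⟨x, hxF, hcxF, hcx, hccx⟩ := l1
        have hcx' : cross x ∈ (↑F : Set (ANVertex (m+4)))ᶜ := by simpa using hcxF
        have r1 := crossreach F IH _ r (hA _) (hA _) ⟨x, hxF, hcxF, hcx, hccx⟩
          u (cross x) hu hcx' rfl hccx
        have r2 := crossreach F IH r _ (hA _) (hA _) l2 (cross x) v hcx' hv hccx rfl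
        exact r1.trans r2
  · -- case B : all of F is inside one class
    push_neg at hA
    obtain ⟨s0, hs0⟩ := hA
    have hsub : F.filter (fun x => cls x = s0) = F := by
      apply Finset.eq_of_subset_of_card_le (Finset.filter_subset _ _)
      omega
    have hFall : ∀ x ∈ F, cls x = s0 := by
      intro x hx
      rw [← hsub] at hx
      exact (Finset.mem_filter.1 hx).2
    have hother : ∀ t : Fin (m+4), t ≠ s0 → (F.filter (fun x => cls x = t)).card ≤ m+1 := by
      intro t ht
      have : F.filter (fun x => cls x = t) = ∅ := by
        apply Finset.eq_empty_of_forall_notMem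
        intro x hx
        rw [Finset.mem_filter] at hx
        exact ht ((hx.2.symm.trans (hFall x hx.1)))
      rw [this]
      simp
    have move : ∀ (w : ANVertex (m+4)) (hw : w ∈ (↑F : Set (ANVertex (m+4)))ᶜ),
        ∃ (w' : ANVertex (m+4)) (hw' : w' ∈ (↑F : Set (ANVertex (m+4)))ᶜ),
          cls w' ≠ s0 ∧ (IndG F).Reachable ⟨w, hw⟩ ⟨w', hw'⟩ := by
      intro w hw
      by_cases hcw : cls w = s0
      · have h1 : cls (cross w) ≠ s0 := by
          rw [← hcw]
          exact cls_cross_ne w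
        have h2 : cross w ∉ F := fun hmem => h1 (hFall _ hmem)
        exact ⟨cross w, by simpa using h2, h1,
          SimpleGraph.Adj.reachable (by exact adj_cross w)⟩
      · exact ⟨w, hw, hcw, by rfl⟩
    obtain ⟨u', hu', hcu', ru⟩ := move u hu
    obtain ⟨v', hv', hcv', rv⟩ := move v hv
    have main : (IndG F).Reachable ⟨u', hu'⟩ ⟨v', hv'⟩ := by
      by_cases hc : cls u' = cls v'
      · exact sameclass F IH (cls v') (hother _ hcv') u' v' hu' hv' hc rfl
      · have hlink : linked F (cls u') (cls v') := by
          obtain ⟨x, hcx, hx2⟩ := exists_vertex (cls u') (cls v') (fun h => hc h.symm)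
          have hx : x ∉ F := fun hmem => hcu' (hcx ▸ hFall x hmem)
          have hcxcls : cls (cross x) = cls v' := by rw [cls_cross, hx2]
          have hcxF : cross x ∉ F := fun hmem => hcv' (hcxcls ▸ hFall _ hmem)
          exact ⟨x, hx, hcxF, hcx, hcxcls⟩
        exact crossreach F IH _ _ (hother _ hcu') (hother _ hcv') hlink
          u' v' hu' hv' rfl rfl
    exact (ru.trans main).trans rv.symm

theorem part3 : ∀ (m : ℕ) (F : Finset (ANVertex (m+3))), F.card ≤ m+1 →
    ((AN (m+3)).induce (↑F : Set (ANVertex (m+3)))ᶜ).Connected := by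
  intro m
  induction m with
  | zero => exact part3_base
  | succ k IH => exact part3_step k IH


/-! ### Regularity -/

lemma sg_inv_apply0 : (sg m)⁻¹ a0 = a1 := by
  rw [Equiv.Perm.inv_eq_iff_eq, sg_apply1]
lemma sg_inv_apply2 : (sg m)⁻¹ a2 = a0 := by
  rw [Equiv.Perm.inv_eq_iff_eq, sg_apply0]

noncomputable def phiN (v : ANVertex (m+3)) (g : Perm (Fin (m+3))) : ANVertex (m+3) :=
  if h : sign (v.1 * g) = 1 then ⟨v.1 * g, h⟩ else ⟨1, map_one _⟩

lemma phiN_of_gens (v : ANVertex (m+3)) {g : Perm (Fin (m+3))} (hg : g ∈ gens m) :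
    (phiN v g).1 = v.1 * g := by
  have hsg : sign (v.1 * g) = 1 := by rw [map_mul, v.2, sign_of_gens hg, one_mul]
  rw [phiN, dif_pos hsg]

lemma neighborSet_eq (v : ANVertex (m+3)) :
    (AN (m+3)).neighborSet v = phiN v '' gens m := by
  ext w
  simp only [SimpleGraph.mem_neighborSet, Set.mem_image]
  rw [adj_iff]
  constructor
  · rintro ⟨g, hg, hw⟩
    exact ⟨g, hg, Subtype.ext ((phiN_of_gens v hg).trans hw.symm)⟩
  · rintro ⟨g, hg, rfl⟩
    exact ⟨g, hg, phiN_of_gens v hg⟩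

lemma phiN_injOn (v : ANVertex (m+3)) : Set.InjOn (phiN v) (gens m) := by
  intro g hg g' hg' h
  have h1 : v.1 * g = v.1 * g' := by
    rw [← phiN_of_gens v hg, ← phiN_of_gens v hg', h]
  exact mul_left_cancel h1

lemma sg_ne_sg_inv : sg m ≠ (sg m)⁻¹ := by
  intro h
  have := congrArg (fun p : Perm (Fin (m+3)) => p a0) h
  simp only [sg_apply0, sg_inv_apply0] at this
  exact a1_ne_a2 this.symm

lemma highSet_ncard : ({i : Fin (m+3) | 3 ≤ (i:ℕ)}).ncard = m := by
  classical
  rw [Set.ncard_eq_toFinset_card']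
  have h1 : ({i : Fin (m+3) | 3 ≤ (i:ℕ)}).toFinset
      = ({a0, a1, a2} : Finset (Fin (m+3)))ᶜ := by
    ext i
    simp only [Set.mem_toFinset, Set.mem_setOf_eq, Finset.mem_compl, Finset.mem_insert,
      Finset.mem_singleton, not_or]
    constructor
    · intro h
      exact ⟨ne_a0 h, ne_a1 h, ne_a2 h⟩
    · rintro ⟨h0, h1, h2⟩
      rw [Fin.ext_iff, a0] at h0
      rw [Fin.ext_iff, a1] at h1
      rw [Fin.ext_iff, a2] at h2
      simp only at h0 h1 h2
      omega
  rw [h1, Finset.card_compl]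
  have h2 : ({a0, a1, a2} : Finset (Fin (m+3))).card = 3 := by
    rw [Finset.card_insert_of_notMem (by simp [a0_ne_a1, a0_ne_a2]),
      Finset.card_insert_of_notMem (by simp [a1_ne_a2]), Finset.card_singleton]
  rw [h2, Fintype.card_fin]
  omega

lemma gens_ncard : (gens m).ncard = m + 2 := by
  classical
  rw [gens]
  have hdisj : Disjoint ({sg m, (sg m)⁻¹} : Set (Perm (Fin (m+3))))
      (tau m '' {i | 3 ≤ (i:ℕ)}) := by
    rw [Set.disjoint_left]
    rintro g (rfl | rfl) ⟨i, hi, heq⟩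
    · have := congrArg (fun p : Perm (Fin (m+3)) => p a2) heq
      simp only [tau_apply2 hi, sg_apply2] at this
      exact ne_a1 hi this
    · have := congrArg (fun p : Perm (Fin (m+3)) => p a2) heq
      simp only [tau_apply2 hi, sg_inv_apply2] at this
      exact ne_a0 hi this
  rw [Set.ncard_union_eq hdisj (Set.toFinite _) (Set.toFinite _)]
  have h1 : ({sg m, (sg m)⁻¹} : Set (Perm (Fin (m+3)))).ncard = 2 :=
    Set.ncard_pair sg_ne_sg_inv
  have h2 : (tau m '' {i | 3 ≤ (i:ℕ)}).ncard = m := by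
    rw [Set.ncard_image_of_injOn, highSet_ncard]
    intro i hi j hj h
    have := congrArg (fun p : Perm (Fin (m+3)) => p a2) h
    simpa only [tau_apply2 hi, tau_apply2 hj] using this
  omega

lemma part1 (v : ANVertex (m+3)) : ((AN (m+3)).neighborSet v).ncard = m + 2 := by
  rw [neighborSet_eq, Set.ncard_image_of_injOn (phiN_injOn v), gens_ncard]

/-! ### Connectivity of the whole graph -/

lemma part2 (m : ℕ) : (AN (m+3)).Connected := by
  classical
  have hconn := part3 m ∅ (by simp)
  rw [Finset.coe_empty, Set.compl_empty] at hconn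
  have hne : Nonempty (ANVertex (m+3)) := ⟨⟨1, map_one _⟩⟩
  refine SimpleGraph.Connected.mk ?_
  intro u v
  let hom : ((AN (m+3)).induce (Set.univ : Set (ANVertex (m+3)))) →g AN (m+3) :=
    ⟨fun z => z.1, fun h => h⟩
  have := (hconn.preconnected ⟨u, trivial⟩ ⟨v, trivial⟩).map hom
  exact this

/-! ### The disconnecting cut -/

lemma card_big2 (m : ℕ) (k : ℕ) (hk : k ≤ m+4) : k < Fintype.card (ANVertex (m+4)) := by
  have hc' : 2 * Fintype.card (ANVertex (m+4)) = Nat.factorial (m+4) := card_ANVertex (m+1)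
  have h2 : m+3 ≤ Nat.factorial (m+3) := Nat.self_le_factorial _
  have h1 : (m+4) * Nat.factorial (m+3) = Nat.factorial (m+4) := rfl
  nlinarith

lemma part4 (m : ℕ) : ∃ F : Finset (ANVertex (m+4)), F.card = m+3 ∧
    ¬ ((AN (m+4)).induce (↑F : Set (ANVertex (m+4)))ᶜ).Connected := by
  classical
  set v0 : ANVertex (m+4) := ⟨1, map_one _⟩ with hv0
  set F : Finset (ANVertex (m+4)) := ((AN (m+4)).neighborSet v0).toFinite.toFinset with hF
  have hcard : F.card = m+3 := by
    rw [hF, ← Set.ncard_eq_toFinset_card _ (Set.toFinite _)]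
    exact part1 (m := m+1) v0
  refine ⟨F, hcard, ?_⟩
  intro hc
  obtain ⟨w, hw⟩ := exists_not_mem_of_card_lt (insert v0 F)
    (lt_of_le_of_lt (Finset.card_insert_le _ _)
      (by rw [hcard]; exact card_big2 m (m+4) le_rfl))
  have hwF : w ∉ F := fun h => hw (Finset.mem_insert_of_mem h)
  have hwv : w ≠ v0 := fun h => hw (h ▸ Finset.mem_insert_self _ _)
  have hv0F : v0 ∉ F := by
    rw [hF, Set.Finite.mem_toFinset]
    exact fun h => (AN (m+4)).loopless.irrefl v0 h
  have hv0' : v0 ∈ (↑F : Set (ANVertex (m+4)))ᶜ := by simpa using hv0F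
  have hw' : w ∈ (↑F : Set (ANVertex (m+4)))ᶜ := by simpa using hwF
  have hr := hc.preconnected ⟨v0, hv0'⟩ ⟨w, hw'⟩
  apply hr.elim
  intro p
  cases p with
  | nil => exact hwv rfl
  | cons h _ =>
    rename_i y _
    have hadj : (AN (m+4)).Adj v0 y.1 := h
    have hmem : y.1 ∈ F := by
      show y.1 ∈ ((AN (m+4)).neighborSet v0).toFinite.toFinset
      rw [Set.Finite.mem_toFinset]
      exact hadj
    exact y.2 (Finset.mem_coe.mpr hmem)

end ANwork

end ANauxiliary

/-- For `n ≥ 3`, `AN_n` is an `(n−1)`-regular connected graph with vertex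
connectivity `n − 1`: every vertex has exactly `n − 1` neighbors, `AN_n` is
connected, removing at most `n − 2` vertices never disconnects it, and (for
`n ≥ 4`) some set of `n − 1` vertices disconnects it. -/
theorem AN_regular_and_connectivity (n : ℕ) (hn : 3 ≤ n) :
    (∀ v : ANVertex n, ((AN n).neighborSet v).ncard = n - 1) ∧
    (AN n).Connected ∧
    (∀ F : Finset (ANVertex n), F.card ≤ n - 2 →
      ((AN n).induce (↑F : Set (ANVertex n))ᶜ).Connected) ∧
    (4 ≤ n → ∃ F : Finset (ANVertex n), F.card = n - 1 ∧
      ¬ ((AN n).induce (↑F : Set (ANVertex n))ᶜ).Connected) := by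
  obtain ⟨m, rfl⟩ : ∃ m, n = m + 3 := ⟨n - 3, by omega⟩
  refine ⟨?_, ANwork.part2 m, ?_, ?_⟩
  · intro v
    have h := ANwork.part1 v
    omega
  · intro F hF
    exact ANwork.part3 m F (by omega)
  · intro h4
    obtain ⟨k, rfl⟩ : ∃ k, m = k + 1 := ⟨m - 1, by omega⟩
    obtain ⟨F, hcard, hconn⟩ := ANwork.part4 k
    exact ⟨F, by omega, hconn⟩
end
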